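/- arXiv:2302.05042 — 4 statements merged into one kernel-verified Lean document; each statement's English description precedes it below -/
import Mathlib

section
/- Let α ≥ 1, a > 1 and b > √a. Then the function z ↦ θ(α; z) − b·θ(aα; z) is unbounded below on the upper half-plane ℍ: for every M ∈ ℝ there exists z ∈ ℍ with θ(α; z) − b·θ(aα; z) < M. In particular, its minimum over ℍ is not attained. -/
open Real Complex Filter Topology

/-- The lattice theta function `θ(α; z) = Σ_{(m,n) ∈ ℤ²} exp(−π α |m z + n|² / Im z)`. -/
noncomputable def latticeTheta (α : ℝ) (z : ℂ) : ℝ :=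
  ∑' p : ℤ × ℤ, Real.exp (-π * α * ‖(p.1 : ℂ) * z + (p.2 : ℂ)‖ ^ 2 / z.im)

/-- `W_b(α; z) = Σ_{(m,n) ∈ ℤ²} (|m z + n|²/Im z − b/α) exp(−π α |m z + n|² / Im z)`. -/
noncomputable def latticeW (b α : ℝ) (z : ℂ) : ℝ :=
  ∑' p : ℤ × ℤ,
    (‖(p.1 : ℂ) * z + (p.2 : ℂ)‖ ^ 2 / z.im - b / α) *
      Real.exp (-π * α * ‖(p.1 : ℂ) * z + (p.2 : ℂ)‖ ^ 2 / z.im)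

/-- The hexagonal point `e^{iπ/3} = 1/2 + i√3/2`. -/
noncomputable def hexPoint : ℂ := ⟨1 / 2, Real.sqrt 3 / 2⟩

noncomputable def thetaF (t : ℝ) : ℝ := ∑' n : ℤ, Real.exp (-π * t * (n : ℝ) ^ 2)

lemma term_eq (t : ℝ) (n : ℤ) :
    cexp (π * I * (n : ℂ) ^ 2 * ((t : ℂ) * I)) = ((Real.exp (-π * t * (n : ℝ) ^ 2) : ℝ) : ℂ) := by
  rw [Complex.ofReal_exp]
  congr 1
  push_cast
  rw [show (π : ℂ) * I * (n:ℂ)^2 * ((t:ℂ)*I) = (π * (n:ℂ)^2 * t) * (I*I) by ring, Complex.I_mul_I]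
  ring

lemma summable_thetaF {t : ℝ} (ht : 0 < t) :
    Summable (fun n : ℤ => Real.exp (-π * t * (n : ℝ) ^ 2)) := by
  have h : Summable fun n : ℤ => jacobiTheta₂_term n 0 ((t : ℂ) * I) := by
    rw [summable_jacobiTheta₂_term_iff]
    simpa using ht
  have h2 : Summable fun n : ℤ => ((Real.exp (-π * t * (n : ℝ) ^ 2) : ℝ) : ℂ) := by
    refine h.congr fun n => ?_
    rw [jacobiTheta₂_term, ← term_eq]
    ring_nf
  exact Complex.summable_ofReal.mp h2

lemma jacobiTheta_eq (t : ℝ) : jacobiTheta ((t : ℂ) * I) = ((thetaF t : ℝ) : ℂ) := by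
  rw [jacobiTheta, thetaF, Complex.ofReal_tsum]
  exact tsum_congr fun n => term_eq t n

lemma thetaF_inv {t : ℝ} (ht : 0 < t) : thetaF (1 / t) = Real.sqrt t * thetaF t := by
  have hτ : (0:ℝ) < ((t : ℂ) * I).im := by simpa using ht
  set τ : UpperHalfPlane := ⟨(t : ℂ) * I, hτ⟩ with hτdef
  have key := jacobiTheta_S_smul τ
  have hco : ((ModularGroup.S • τ : UpperHalfPlane) : ℂ) = ((1 / t : ℝ) : ℂ) * I := by
    rw [UpperHalfPlane.modular_S_smul]
    show (-((t:ℂ) * I))⁻¹ = ((1 / t : ℝ) : ℂ) * I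
    have h0 : (t:ℂ) ≠ 0 := by exact_mod_cast ht.ne'
    rw [inv_neg, mul_inv, Complex.inv_I]
    push_cast
    field_simp
  rw [hco] at key
  have h2 : (-I * ((t : ℂ) * I)) = (t : ℂ) := by
    rw [show -I * ((t:ℂ)*I) = -(I*I) * t by ring, Complex.I_mul_I]; ring
  have h3 : ((t : ℂ)) ^ (1 / 2 : ℂ) = ((Real.sqrt t : ℝ) : ℂ) := by
    rw [Real.sqrt_eq_rpow, Complex.ofReal_cpow ht.le]
    norm_num
  have hτc : (τ : ℂ) = (t : ℂ) * I := rfl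
  rw [hτc, h2, h3, jacobiTheta_eq, jacobiTheta_eq] at key
  exact_mod_cast key

lemma thetaF_tendsto : Tendsto thetaF atTop (𝓝 1) := by
  have hexp : Tendsto (fun t : ℝ => Real.exp (-π * t)) atTop (𝓝 0) := by
    apply Real.tendsto_exp_atBot.comp
    apply Tendsto.const_mul_atTop_of_neg (neg_neg_of_pos pi_pos) tendsto_id
  have hbound : Tendsto (fun t : ℝ => 2 / (1 - Real.exp (-π * t)) * Real.exp (-π * t))
      atTop (𝓝 0) := by
    have := ((tendsto_const_nhds (x := (2:ℝ))).div ((tendsto_const_nhds (x := (1:ℝ))).sub hexp)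
      (by norm_num)).mul hexp
    simpa using this
  have hsub : Tendsto (fun t => thetaF t - 1) atTop (𝓝 0) := by
    apply squeeze_zero_norm' _ hbound
    filter_upwards [eventually_gt_atTop (0:ℝ)] with t ht
    have hτ : (0:ℝ) < ((t : ℂ) * I).im := by simpa using ht
    have := norm_jacobiTheta_sub_one_le hτ
    rw [jacobiTheta_eq] at this
    have him : ((t : ℂ) * I).im = t := by simp
    rw [him] at this
    calc ‖thetaF t - 1‖ = ‖(((thetaF t - 1 : ℝ)) : ℂ)‖ := by rw [Complex.norm_real]
      _ ≤ _ := by push_cast; exact this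
  have := hsub.add (tendsto_const_nhds (x := (1:ℝ)))
  simpa using this

set_option maxHeartbeats 1000000 in
lemma lattice_factor {α y : ℝ} (hα : 0 < α) (hy : 0 < y) :
    latticeTheta α ((y : ℂ) * I) = thetaF (α * y) * thetaF (α / y) := by
  rw [latticeTheta, thetaF, thetaF]
  have him : ((y : ℂ) * I).im = y := by simp
  have hterm : ∀ p : ℤ × ℤ,
      Real.exp (-π * α * ‖(p.1 : ℂ) * ((y:ℂ)*I) + (p.2 : ℂ)‖ ^ 2 / ((y:ℂ)*I).im)
      = Real.exp (-π * (α * y) * (p.1 : ℝ) ^ 2) * Real.exp (-π * (α / y) * (p.2 : ℝ) ^ 2) := by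
    intro p
    obtain ⟨m, n⟩ := p
    rw [← Real.exp_add]
    congr 1
    have habs : ‖(m : ℂ) * ((y:ℂ)*I) + (n : ℂ)‖ ^ 2 = (n:ℝ)^2 + (m*y)^2 := by
      rw [Complex.sq_norm]
      have : (m : ℂ) * ((y:ℂ)*I) + (n : ℂ) = ((n : ℝ) : ℂ) + ((m * y : ℝ) : ℂ) * I := by
        push_cast; ring
      rw [this, Complex.normSq_add_mul_I]
    rw [habs, him]
    field_simp [hy.ne']
    ring
  rw [tsum_congr hterm]
  have hf := summable_thetaF (mul_pos hα hy)
  have hg := summable_thetaF (div_pos hα hy)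
  exact (Summable.tsum_mul_tsum hf hg (hf.mul_of_nonneg hg (fun _ => (Real.exp_pos _).le)
    (fun _ => (Real.exp_pos _).le))).symm

theorem theta_difference_unbounded_below (α a b : ℝ) (hα : 1 ≤ α) (ha : 1 < a)
    (hb : Real.sqrt a < b) :
    ∀ M : ℝ, ∃ z : ℂ, 0 < z.im ∧ latticeTheta α z - b * latticeTheta (a * α) z < M := by
  intro M
  have hα0 : (0:ℝ) < α := lt_of_lt_of_le one_pos hα
  have ha0 : (0:ℝ) < a := lt_trans one_pos ha
  have hsa : (0:ℝ) < Real.sqrt a := Real.sqrt_pos.mpr ha0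
  have hba : 1 < b / Real.sqrt a := (one_lt_div hsa).mpr hb
  set φ : ℝ → ℝ := fun y => Real.sqrt (y / α) *
    (thetaF (α * y) * thetaF (y / α) -
      (b / Real.sqrt a) * (thetaF (a * α * y) * thetaF (y / (a * α))))
  have hφ : Tendsto φ atTop atBot := by
    have hyα : Tendsto (fun y : ℝ => y / α) atTop atTop := tendsto_id.atTop_div_const hα0
    have hs : Tendsto Real.sqrt atTop atTop :=
      (tendsto_rpow_atTop (by norm_num : (0:ℝ) < 1/2)).congr
        (fun x => (Real.sqrt_eq_rpow x).symm)
    have hsqrt : Tendsto (fun y : ℝ => Real.sqrt (y / α)) atTop atTop := hs.comp hyα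
    have t1 : Tendsto (fun y : ℝ => thetaF (α * y)) atTop (𝓝 1) :=
      thetaF_tendsto.comp (tendsto_id.const_mul_atTop hα0)
    have t2 : Tendsto (fun y : ℝ => thetaF (y / α)) atTop (𝓝 1) := thetaF_tendsto.comp hyα
    have t3 : Tendsto (fun y : ℝ => thetaF (a * α * y)) atTop (𝓝 1) :=
      thetaF_tendsto.comp (tendsto_id.const_mul_atTop (mul_pos ha0 hα0))
    have t4 : Tendsto (fun y : ℝ => thetaF (y / (a * α))) atTop (𝓝 1) :=
      thetaF_tendsto.comp (tendsto_id.atTop_div_const (mul_pos ha0 hα0))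
    have tb : Tendsto (fun y : ℝ => thetaF (α * y) * thetaF (y / α) -
        (b / Real.sqrt a) * (thetaF (a * α * y) * thetaF (y / (a * α)))) atTop
        (𝓝 (1 * 1 - (b / Real.sqrt a) * (1 * 1))) :=
      (t1.mul t2).sub (tendsto_const_nhds.mul (t3.mul t4))
    have hlim : 1 * 1 - (b / Real.sqrt a) * (1 * 1) < 0 := by nlinarith
    exact hsqrt.atTop_mul_neg hlim tb
  obtain ⟨y, hyM, hy0⟩ := ((hφ.eventually (eventually_lt_atBot M)).and
    (eventually_gt_atTop (0:ℝ))).exists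
  refine ⟨(y : ℂ) * I, by simpa using hy0, ?_⟩
  have key : latticeTheta α ((y:ℂ)*I) - b * latticeTheta (a * α) ((y:ℂ)*I) = φ y := by
    rw [lattice_factor hα0 hy0, lattice_factor (mul_pos ha0 hα0) hy0]
    have e1 : thetaF (α / y) = Real.sqrt (y / α) * thetaF (y / α) := by
      have := thetaF_inv (div_pos hy0 hα0)
      rwa [one_div, inv_div] at this
    have e2 : thetaF (a * α / y) = Real.sqrt (y / (a * α)) * thetaF (y / (a * α)) := by
      have := thetaF_inv (div_pos hy0 (mul_pos ha0 hα0))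
      rwa [one_div, inv_div] at this
    have e3 : Real.sqrt (y / (a * α)) = Real.sqrt (y / α) / Real.sqrt a := by
      rw [show y / (a * α) = (y / α) / a by rw [div_div]; ring_nf,
        Real.sqrt_div (by positivity)]
    rw [e1, e2, e3]
    ring
  rw [key]
  exact hyM
end

section
/- For every X with 0 < X ≤ 1/2 and every Y ∈ ℝ, one has |Σ_{n ∈ ℤ} (n − Y)³ e^{−π(n−Y)²/X}| ≤ (1/4)·|Σ_{n ∈ ℤ} (n − Y) e^{−π(n−Y)²/X}|. -/
open Real

noncomputable section CubicAux

/-- The Gaussian factor. -/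
def EE (c t : ℝ) : ℝ := Real.exp (-(c * t ^ 2))

def gg (c t : ℝ) : ℝ := t * (t ^ 2 - 1/4) * EE c t

def mm (c t : ℝ) : ℝ := t * (t ^ 2 + 1/4) * EE c t

lemma EE_pos (c t : ℝ) : 0 < EE c t := Real.exp_pos _

lemma EE_nonneg (c t : ℝ) : 0 ≤ EE c t := (EE_pos c t).le

lemma EE_neg (c t : ℝ) : EE c (-t) = EE c t := by simp [EE]

lemma gg_neg (c t : ℝ) : gg c (-t) = - gg c t := by
  simp only [gg, EE_neg]; ring

lemma mm_neg (c t : ℝ) : mm c (-t) = - mm c t := by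
  simp only [mm, EE_neg]; ring

lemma EE_mono {c s t : ℝ} (hc : 0 ≤ c) (hst : s ^ 2 ≤ t ^ 2) : EE c t ≤ EE c s := by
  apply Real.exp_le_exp.2
  nlinarith

lemma EE_factor (c w v : ℝ) : EE c v = EE c w * Real.exp (-(c * (v ^ 2 - w ^ 2))) := by
  rw [EE, EE, ← Real.exp_add]; ring_nf

/-- `exp x ≥ (1 + x/n)^n` for `x ≥ 0`. -/
lemma exp_ge_pow {x : ℝ} (n : ℕ) (hx : 0 ≤ x) (hn : 0 < n) :
    (1 + x / n) ^ n ≤ Real.exp x := by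
  have h1 : (1 + x / n) ≤ Real.exp (x / n) := by
    have := Real.add_one_le_exp (x / n); linarith
  have h2 : (1 + x / n) ^ n ≤ Real.exp (x / n) ^ n := by
    apply pow_le_pow_left₀ _ h1
    positivity
  have h3 : Real.exp (x / n) ^ n = Real.exp x := by
    rw [← Real.exp_nat_mul]
    congr 1
    field_simp
  linarith [h2, h3.le, h3.ge]

/-- monotonicity of `c ↦ c * exp (-(a*c))` past `c₀ ≥ 1/a`. -/
lemma c_exp_le {a c c0 : ℝ} (hc0 : 0 < c0) (hc : c0 ≤ c) (ha : 1 ≤ a * c0) :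
    c * Real.exp (-(a * c)) ≤ c0 * Real.exp (-(a * c0)) := by
  have ha0 : 0 ≤ a := by nlinarith
  have h1 : Real.exp (a * (c - c0)) ≥ 1 + a * (c - c0) := by
    have := Real.add_one_le_exp (a * (c - c0)); linarith
  have h2 : c ≤ c0 * (1 + a * (c - c0)) := by nlinarith
  have h3 : c ≤ c0 * Real.exp (a * (c - c0)) := by nlinarith
  have h4 : Real.exp (-(a * c)) = Real.exp (-(a * c0)) / Real.exp (a * (c - c0)) := by
    rw [← Real.exp_sub]; ring_nf
  rw [h4]
  calc c * (Real.exp (-(a * c0)) / Real.exp (a * (c - c0)))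
      = c / Real.exp (a * (c - c0)) * Real.exp (-(a * c0)) := by ring
    _ ≤ c0 * Real.exp (-(a * c0)) := by
        apply mul_le_mul_of_nonneg_right _ (Real.exp_pos _).le
        rw [div_le_iff₀ (Real.exp_pos _)]
        nlinarith [Real.exp_pos (a * (c - c0))]

lemma exp_six : (400 : ℝ) ≤ Real.exp 6 := by
  have h := Real.exp_one_gt_d9
  have h6 : Real.exp 6 = Real.exp 1 ^ 6 := by
    rw [← Real.exp_nat_mul]; norm_num
  have : (2.7182818283 : ℝ) ^ 6 ≤ Real.exp 1 ^ 6 := by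
    apply pow_le_pow_left₀ (by norm_num) h.le
  nlinarith [this]

lemma nat_add_le_two_pow (n : ℕ) (b : ℝ) (hb : 1 ≤ b) (hb2 : b ≤ 2.5) :
    (n : ℝ) + b ≤ b * 2 ^ n := by
  have h := Nat.lt_two_pow_self (n := n)
  have h' : (n : ℝ) + 1 ≤ 2 ^ n := by exact_mod_cast h
  nlinarith [h']

lemma sq_nat_le (n : ℕ) : (n : ℝ) ≤ (n : ℝ) ^ 2 := by
  rcases Nat.eq_zero_or_pos n with h | h
  · simp [h]
  · have : (1 : ℝ) ≤ (n : ℝ) := by exact_mod_cast h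
    nlinarith

/-- master domination for summability -/
lemma dom_main {c t : ℝ} (hc : 6 ≤ c) (n : ℕ) (hn : (n : ℝ) ≤ t) (ht : t ≤ (n : ℝ) + 2) :
    t * (t ^ 2 + 1) * Real.exp (-(c * t ^ 2)) ≤ 16 * (1/2 : ℝ) ^ n := by
  have ht0 : 0 ≤ t := le_trans (Nat.cast_nonneg n) hn
  have hp : t * (t ^ 2 + 1) ≤ 10 * 8 ^ n := by
    have h2 : (n : ℝ) + 2 ≤ 2 * 2 ^ n := by
      have := nat_add_le_two_pow n 2 (by norm_num) (by norm_num); linarith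
    have h3 : t ^ 2 + 1 ≤ ((n:ℝ) + 2) ^ 2 + 1 := by nlinarith
    have h4 : t * (t ^ 2 + 1) ≤ ((n:ℝ)+2) * (((n:ℝ)+2) ^ 2 + 1) := by
      apply mul_le_mul ht h3 (by positivity) (by positivity)
    have h5 : ((n:ℝ)+2) * (((n:ℝ)+2) ^ 2 + 1) ≤ (2*2^n) * ((2*2^n)^2 + 1) := by
      have h6 : ((n:ℝ)+2)^2 ≤ (2*2^n)^2 := by
        apply sq_le_sq' _ h2; nlinarith [pow_pos (show (0:ℝ) < 2 by norm_num) n]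
      apply mul_le_mul h2 (by nlinarith) (by positivity) (by positivity)
    have h7 : (2*(2:ℝ)^n) * ((2*2^n)^2 + 1) ≤ 10 * 8^n := by
      have e1 : ((2:ℝ)^n)^3 = 8^n := by
        rw [← pow_mul, pow_mul']; norm_num
      have e2 : (2:ℝ)^n ≤ 8^n := by
        apply pow_le_pow_left₀ (by norm_num) (by norm_num)
      nlinarith [pow_pos (show (0:ℝ) < 2 by norm_num) n, pow_pos (show (0:ℝ) < 8 by norm_num) n, e2]
    linarith
  have hexp : Real.exp (-(c * t ^ 2)) ≤ (1/400 : ℝ) ^ n := by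
    have h1 : (n : ℝ) ≤ t ^ 2 := le_trans (sq_nat_le n) (by nlinarith)
    have h2 : Real.exp (-(c * t ^ 2)) ≤ Real.exp ((n : ℝ) * (-c)) := by
      apply Real.exp_le_exp.2; nlinarith
    have h3 : Real.exp ((n:ℝ) * (-c)) = Real.exp (-c) ^ n := Real.exp_nat_mul _ n
    have h4 : Real.exp (-c) ≤ 1/400 := by
      rw [Real.exp_neg]
      rw [inv_le_comm₀ (Real.exp_pos _) (by norm_num)]
      calc (1/400 : ℝ)⁻¹ = 400 := by norm_num
        _ ≤ Real.exp 6 := exp_six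
        _ ≤ Real.exp c := Real.exp_le_exp.2 hc
    have h5 : Real.exp (-c) ^ n ≤ (1/400 : ℝ) ^ n := by
      apply pow_le_pow_left₀ (Real.exp_pos _).le h4
    rw [h3] at h2; linarith
  calc t * (t ^ 2 + 1) * Real.exp (-(c * t ^ 2)) ≤ (10 * 8 ^ n) * (1/400 : ℝ) ^ n := by
        apply mul_le_mul hp hexp (Real.exp_pos _).le (by positivity)
    _ = 10 * (8/400 : ℝ) ^ n := by
        rw [div_pow, div_pow, one_pow]
        field_simp
    _ ≤ 16 * (1/2 : ℝ) ^ n := by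
        have : (8/400 : ℝ) ^ n ≤ (1/2 : ℝ) ^ n := by
          apply pow_le_pow_left₀ (by norm_num) (by norm_num)
        nlinarith [pow_nonneg (show (0:ℝ) ≤ 8/400 by norm_num) n]

lemma summable_dom {a : ℕ → ℝ} (h : ∀ n, |a n| ≤ 16 * (1/2 : ℝ) ^ n) : Summable a := by
  apply Summable.of_norm_bounded (g := fun n => 16 * (1/2 : ℝ) ^ n)
  · exact (summable_geometric_of_lt_one (by norm_num) (by norm_num)).mul_left 16
  · exact h

lemma abs_gg_le (c t : ℝ) : |gg c t| ≤ |t| * (t ^ 2 + 1) * EE c t := by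
  rw [gg, abs_mul, abs_mul]
  rw [abs_of_pos (EE_pos c t)]
  apply mul_le_mul_of_nonneg_right _ (EE_nonneg c t)
  apply mul_le_mul_of_nonneg_left _ (abs_nonneg t)
  rw [abs_le]; constructor <;> nlinarith [sq_nonneg t]

lemma abs_mm_le (c t : ℝ) : |mm c t| ≤ |t| * (t ^ 2 + 1) * EE c t := by
  rw [mm, abs_mul, abs_mul]
  rw [abs_of_pos (EE_pos c t)]
  apply mul_le_mul_of_nonneg_right _ (EE_nonneg c t)
  apply mul_le_mul_of_nonneg_left _ (abs_nonneg t)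
  rw [abs_le]; constructor <;> nlinarith [sq_nonneg t]

end CubicAux

section CubicAux2
open Real
set_option maxHeartbeats 1000000

lemma cub_diff_m {w v : ℝ} (hw0 : 0 ≤ w) (hwv : w ≤ v) :
    w * (w ^ 2 + 1/4) ≤ v * (v ^ 2 + 1/4) := by
  have h : v * (v ^ 2 + 1/4) - w * (w ^ 2 + 1/4) = (v - w) * (v^2 + v*w + w^2 + 1/4) := by ring
  nlinarith [mul_nonneg (sub_nonneg.2 hwv) (by nlinarith : (0:ℝ) ≤ v^2 + v*w + w^2 + 1/4)]

lemma cub_diff_g {w v : ℝ} (hw : 1/2 ≤ w) (hwv : w ≤ v) :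
    w * (w ^ 2 - 1/4) ≤ v * (v ^ 2 - 1/4) := by
  have hv : 1/2 ≤ v := le_trans hw hwv
  have h : v * (v ^ 2 - 1/4) - w * (w ^ 2 - 1/4) = (v - w) * (v^2 + v*w + w^2 - 1/4) := by ring
  nlinarith [mul_nonneg (sub_nonneg.2 hwv) (by nlinarith : (0:ℝ) ≤ v^2 + v*w + w^2 - 1/4)]

lemma sqdiff_nonneg {w v : ℝ} (hw0 : 0 ≤ w) (hwv : w ≤ v) : 0 ≤ v ^ 2 - w ^ 2 := by nlinarith

/-- Lower bound for `gg c v - gg c w` when `1/2 ≤ w ≤ v`. -/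
lemma gdiff_lower1 {c w v : ℝ} (hc : 0 < c) (hw : 1/2 ≤ w) (hwv : w ≤ v) :
    -(w * (w ^ 2 - 1/4) * EE c w * (c * (v ^ 2 - w ^ 2))) ≤ gg c v - gg c w := by
  have hEw := EE_pos c w
  have hcub := cub_diff_g hw hwv
  have hw0 : 0 ≤ w * (w ^ 2 - 1/4) := by nlinarith
  have hz : 0 ≤ c * (v ^ 2 - w ^ 2) :=
    mul_nonneg hc.le (sqdiff_nonneg (by linarith) hwv)
  have hfac : EE c v = EE c w * Real.exp (-(c * (v ^ 2 - w ^ 2))) := EE_factor c w v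
  have hexp : 1 - c * (v ^ 2 - w ^ 2) ≤ Real.exp (-(c * (v ^ 2 - w ^ 2))) := by
    have := Real.add_one_le_exp (-(c * (v ^ 2 - w ^ 2))); linarith
  have h1 : gg c v ≥ w * (w ^ 2 - 1/4) * EE c v := by
    rw [gg]
    apply mul_le_mul_of_nonneg_right hcub (EE_nonneg c v)
  have h2 : w * (w ^ 2 - 1/4) * EE c v ≥ w * (w ^ 2 - 1/4) * EE c w * (1 - c * (v ^ 2 - w ^ 2)) := by
    rw [hfac]
    have := mul_le_mul_of_nonneg_left hexp (mul_nonneg hw0 (EE_nonneg c w))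
    nlinarith [this]
  have h3 : gg c w = w * (w ^ 2 - 1/4) * EE c w := rfl
  nlinarith [h1, h2]

/-- Lower bound for `gg c w - gg c v` when `0 ≤ w ≤ v`, `1/2 ≤ v`. -/
lemma gdiff_lower2 {c w v : ℝ} (hc : 0 < c) (hw0 : 0 ≤ w) (hwv : w ≤ v) (hv : 1/2 ≤ v) :
    -(3 * v ^ 2 * (v - w) * EE c w) ≤ gg c w - gg c v := by
  have hEw := EE_pos c w
  have hEvw : EE c v ≤ EE c w := EE_mono hc.le (by nlinarith)
  have hv0 : 0 ≤ v * (v ^ 2 - 1/4) := by nlinarith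
  have h1 : gg c v ≤ v * (v ^ 2 - 1/4) * EE c w := by
    rw [gg]
    apply mul_le_mul_of_nonneg_left hEvw hv0
  have h2 : v * (v ^ 2 - 1/4) - w * (w ^ 2 - 1/4) ≤ 3 * v ^ 2 * (v - w) := by
    have e : v * (v ^ 2 - 1/4) - w * (w ^ 2 - 1/4) = (v - w) * (v^2 + v*w + w^2 - 1/4) := by ring
    rw [e]
    have h4 : v^2 + v*w + w^2 - 1/4 ≤ 3 * v^2 := by nlinarith
    have h5 : 0 ≤ v - w := by linarith
    nlinarith [mul_le_mul_of_nonneg_left h4 h5]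
  have h3 : gg c w = w * (w ^ 2 - 1/4) * EE c w := rfl
  nlinarith [h1, mul_le_mul_of_nonneg_right h2 (EE_nonneg c w)]

/-- Upper bound for `mm c w - mm c v` when `0 ≤ w ≤ v`. -/
lemma mdiff_upper {c w v : ℝ} (hc : 0 < c) (hw0 : 0 ≤ w) (hwv : w ≤ v) :
    mm c w - mm c v ≤ v * (v ^ 2 + 1/4) * EE c w * (c * (v ^ 2 - w ^ 2)) := by
  have hEw := EE_pos c w
  have hcub := cub_diff_m hw0 hwv
  have hv0 : 0 ≤ v * (v ^ 2 + 1/4) := by nlinarith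
  have hz : 0 ≤ c * (v ^ 2 - w ^ 2) := mul_nonneg hc.le (sqdiff_nonneg hw0 hwv)
  have hfac : EE c v = EE c w * Real.exp (-(c * (v ^ 2 - w ^ 2))) := EE_factor c w v
  have hexp : 1 - c * (v ^ 2 - w ^ 2) ≤ Real.exp (-(c * (v ^ 2 - w ^ 2))) := by
    have := Real.add_one_le_exp (-(c * (v ^ 2 - w ^ 2))); linarith
  have h1 : mm c w ≤ v * (v ^ 2 + 1/4) * EE c w := by
    rw [mm]
    apply mul_le_mul_of_nonneg_right hcub (EE_nonneg c w)
  have h2 : mm c v ≥ v * (v ^ 2 + 1/4) * EE c w * (1 - c * (v ^ 2 - w ^ 2)) := by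
    rw [mm, hfac]
    have := mul_le_mul_of_nonneg_left hexp (mul_nonneg hv0 (EE_nonneg c w))
    nlinarith [this]
  nlinarith [h1, h2]

/-- `mm` is decreasing past 1 (for `c ≥ 2π`), at steps of size at most 1. -/
lemma mm_mono {c w v : ℝ} (hc : 2 * π ≤ c) (hw : 1 ≤ w) (hwv : w ≤ v) (hv : v ≤ w + 1) :
    mm c v ≤ mm c w := by
  have hpi : (3.141592 : ℝ) < π := Real.pi_gt_d6
  have hc6 : (6.283 : ℝ) ≤ c := by linarith
  have hEw := EE_pos c w
  have hsq : 0 ≤ v ^ 2 - w ^ 2 := sqdiff_nonneg (by linarith) hwv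
  have hz : 6.283 * (v ^ 2 - w ^ 2) ≤ c * (v ^ 2 - w ^ 2) := by nlinarith
  have hz0 : 0 ≤ c * (v ^ 2 - w ^ 2) := by nlinarith
  have hexp : 1 + c * (v ^ 2 - w ^ 2) ≤ Real.exp (c * (v ^ 2 - w ^ 2)) := by
    have := Real.add_one_le_exp (c * (v ^ 2 - w ^ 2)); linarith
  have hw0 : (0:ℝ) ≤ w := by linarith
  have hpoly : v * (v ^ 2 + 1/4) ≤ w * (w ^ 2 + 1/4) * (1 + 6.283 * (v ^ 2 - w ^ 2)) := by
    have e1 : v * (v ^ 2 + 1/4) - w * (w ^ 2 + 1/4) = (v - w) * (v^2 + v*w + w^2 + 1/4) := by ring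
    have e2 : v^2 + v*w + w^2 + 1/4 ≤ 12.25 * w^2 := by nlinarith
    have e3 : v * (v ^ 2 + 1/4) - w * (w ^ 2 + 1/4) ≤ (v - w) * (12.25 * w^2) := by
      rw [e1]
      apply mul_le_mul_of_nonneg_left e2 (by linarith)
    have e4 : (v - w) * (12.25 * w ^ 2) ≤ w * (w ^ 2 + 1/4) * (6.283 * (v ^ 2 - w ^ 2)) := by
      have e5 : v ^ 2 - w ^ 2 = (v - w) * (v + w) := by ring
      rw [e5]
      have e6 : (v-w) * (12.25 * w^2) ≤ (v-w) * (12.566 * w^4) := by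
        apply mul_le_mul_of_nonneg_left _ (by linarith)
        nlinarith [sq_nonneg w, sq_nonneg (w^2 - 1)]
      have hvw0 : (0:ℝ) ≤ v - w := by linarith
      have e7a : (0:ℝ) ≤ w^3*(v-w) + w*v/4 + w^2/4 := by
        have : (0:ℝ) ≤ w^3*(v-w) := mul_nonneg (by positivity) hvw0
        nlinarith [sq_nonneg w]
      have e7b : w*(w^2+1/4)*(6.283*((v-w)*(v+w))) - (v-w)*(12.566*w^4)
          = 6.283*((v-w)*(w^3*(v-w) + w*v/4 + w^2/4)) := by ring
      have e7 : (v-w) * (12.566 * w^4) ≤ w * (w^2+1/4) * (6.283 * ((v-w)*(v+w))) := by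
        nlinarith [mul_nonneg hvw0 e7a]
      linarith
    nlinarith [e3, e4]
  have hkey : v * (v ^ 2 + 1/4) * EE c w ≤ w * (w ^ 2 + 1/4) * Real.exp (c * (v ^ 2 - w ^ 2)) * EE c w := by
    apply mul_le_mul_of_nonneg_right _ (EE_nonneg c w)
    have hw00 : 0 ≤ w * (w ^ 2 + 1/4) := by nlinarith
    calc v * (v ^ 2 + 1/4) ≤ w * (w ^ 2 + 1/4) * (1 + 6.283 * (v ^ 2 - w ^ 2)) := hpoly
      _ ≤ w * (w ^ 2 + 1/4) * (1 + c * (v ^ 2 - w ^ 2)) := by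
          apply mul_le_mul_of_nonneg_left _ hw00; linarith
      _ ≤ w * (w ^ 2 + 1/4) * Real.exp (c * (v ^ 2 - w ^ 2)) := by
          apply mul_le_mul_of_nonneg_left hexp hw00
  have hfac : EE c v = EE c w * Real.exp (-(c * (v ^ 2 - w ^ 2))) := EE_factor c w v
  have hepos := Real.exp_pos (c * (v ^ 2 - w ^ 2))
  rw [mm, mm, hfac, Real.exp_neg]
  calc v * (v ^ 2 + 1/4) * (EE c w * (Real.exp (c * (v ^ 2 - w ^ 2)))⁻¹)
      = v * (v ^ 2 + 1/4) * EE c w * (Real.exp (c * (v ^ 2 - w ^ 2)))⁻¹ := by ring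
    _ ≤ w * (w ^ 2 + 1/4) * Real.exp (c * (v ^ 2 - w ^ 2)) * EE c w * (Real.exp (c * (v ^ 2 - w ^ 2)))⁻¹ := by
        apply mul_le_mul_of_nonneg_right hkey (by positivity)
    _ = w * (w ^ 2 + 1/4) * EE c w * (Real.exp (c * (v ^ 2 - w ^ 2)) * (Real.exp (c * (v ^ 2 - w ^ 2)))⁻¹) := by ring
    _ = w * (w ^ 2 + 1/4) * EE c w := by
        rw [mul_inv_cancel₀ (ne_of_gt hepos), mul_one]

end CubicAux2

section CubicAux3
open Real
set_option maxHeartbeats 1000000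

/-- core polynomial inequality for the `n = 0` bracket in regime A1. -/
lemma P1_poly {Y : ℝ} (hY0 : 0 ≤ Y) (hY : Y ≤ 0.3) :
    (1+Y)*((1+Y)^2 - 1/4) ≤ (1-Y)*((1-Y)^2 - 1/4) * (1 + 12.566368*Y)^2 := by
  nlinarith [sq_nonneg Y, sq_nonneg (Y - 0.3), mul_nonneg hY0 (sub_nonneg.2 hY),
    mul_nonneg (mul_nonneg hY0 hY0) (sub_nonneg.2 hY), sq_nonneg (Y*(Y-0.3)),
    mul_nonneg (mul_nonneg hY0 hY0) (mul_nonneg hY0 hY0)]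

/-- `gg c (1+Y) ≤ gg c (1-Y)` for `0 ≤ Y ≤ 0.3`, `c ≥ 2π`. -/
lemma br0_nonneg {c Y : ℝ} (hc : 2 * π ≤ c) (hY0 : 0 ≤ Y) (hY : Y ≤ 0.3) :
    gg c (1+Y) ≤ gg c (1-Y) := by
  have hpi : (3.141592 : ℝ) < π := Real.pi_gt_d6
  have hc6 : (6.283184 : ℝ) ≤ c := by linarith
  have hL : 0 ≤ (1-Y)*((1-Y)^2 - 1/4) := by nlinarith
  have hfac : EE c (1+Y) = EE c (1-Y) * Real.exp (-(c * ((1+Y)^2 - (1-Y)^2))) :=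
    EE_factor c (1-Y) (1+Y)
  have hsq : (1+Y)^2 - (1-Y)^2 = 4*Y := by ring
  rw [hsq] at hfac
  -- exp(c*4Y) ≥ (1 + 2cY)^2 ≥ (1+12.566368 Y)^2
  have he1 : (1 + (c*(4*Y))/2)^2 ≤ Real.exp (c*(4*Y)) := by
    have h4 := exp_ge_pow (x := c*(4*Y)) 2 (by positivity) (by norm_num)
    calc (1 + (c*(4*Y))/2)^2 = (1 + (c*(4*Y))/(2:ℕ))^2 := by norm_num
      _ ≤ Real.exp (c*(4*Y)) := h4
  have he2 : (1 + 12.566368*Y)^2 ≤ (1 + (c*(4*Y))/2)^2 := by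
    have : 12.566368*Y ≤ (c*(4*Y))/2 := by nlinarith
    have h0 : (0:ℝ) ≤ 1 + 12.566368*Y := by nlinarith
    nlinarith
  have hkey : (1+Y)*((1+Y)^2 - 1/4) ≤ (1-Y)*((1-Y)^2 - 1/4) * Real.exp (c*(4*Y)) := by
    calc (1+Y)*((1+Y)^2 - 1/4) ≤ (1-Y)*((1-Y)^2 - 1/4) * (1 + 12.566368*Y)^2 :=
          P1_poly hY0 hY
      _ ≤ (1-Y)*((1-Y)^2 - 1/4) * Real.exp (c*(4*Y)) := by
          apply mul_le_mul_of_nonneg_left _ hL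
          linarith [he1, he2]
  have hepos := Real.exp_pos (c*(4*Y))
  rw [gg, gg, hfac, Real.exp_neg]
  calc (1+Y) * ((1+Y)^2 - 1/4) * (EE c (1-Y) * (Real.exp (c*(4*Y)))⁻¹)
      = ((1+Y) * ((1+Y)^2 - 1/4)) * (Real.exp (c*(4*Y)))⁻¹ * EE c (1-Y) := by ring
    _ ≤ ((1-Y)*((1-Y)^2 - 1/4) * Real.exp (c*(4*Y))) * (Real.exp (c*(4*Y)))⁻¹ * EE c (1-Y) := by
        apply mul_le_mul_of_nonneg_right _ (EE_nonneg _ _)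
        apply mul_le_mul_of_nonneg_right hkey (by positivity)
    _ = (1-Y)*((1-Y)^2 - 1/4) * (Real.exp (c*(4*Y)) * (Real.exp (c*(4*Y)))⁻¹) * EE c (1-Y) := by ring
    _ = (1-Y) * ((1-Y)^2 - 1/4) * EE c (1-Y) := by
        rw [mul_inv_cancel₀ (ne_of_gt hepos), mul_one]

/-- generic flip: `mm c (1-Y) ≤ mm c Y` from a polynomial bound with constant `K`. -/
lemma mm_flip {c Y K : ℝ} (hY0 : 0 < Y) (hY : Y ≤ 1/2) (hK : 0 < K)
    (hKe : K ≤ Real.exp (c*(1-2*Y)))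
    (hpoly : (1-Y)*((1-Y)^2+1/4) ≤ Y*(Y^2+1/4)*K) :
    mm c (1-Y) ≤ mm c Y := by
  have hfac : EE c (1-Y) = EE c Y * Real.exp (-(c * ((1-Y)^2 - Y^2))) := EE_factor c Y (1-Y)
  have hsq : (1-Y)^2 - Y^2 = 1-2*Y := by ring
  rw [hsq] at hfac
  have hepos := Real.exp_pos (c*(1-2*Y))
  have hR : 0 ≤ (1-Y)*((1-Y)^2+1/4) := by nlinarith
  have hinv : (Real.exp (c*(1-2*Y)))⁻¹ ≤ K⁻¹ := by
    apply inv_anti₀ hK hKe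
  rw [mm, mm, hfac, Real.exp_neg]
  calc (1-Y) * ((1-Y)^2 + 1/4) * (EE c Y * (Real.exp (c*(1-2*Y)))⁻¹)
      = ((1-Y) * ((1-Y)^2 + 1/4) * (Real.exp (c*(1-2*Y)))⁻¹) * EE c Y := by ring
    _ ≤ ((1-Y) * ((1-Y)^2 + 1/4) * K⁻¹) * EE c Y := by
        apply mul_le_mul_of_nonneg_right _ (EE_nonneg _ _)
        apply mul_le_mul_of_nonneg_left hinv hR
    _ ≤ (Y * (Y^2 + 1/4) * K) * K⁻¹ * EE c Y := by
        apply mul_le_mul_of_nonneg_right _ (EE_nonneg _ _)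
        apply mul_le_mul_of_nonneg_right hpoly (by positivity)
    _ = Y * (Y^2 + 1/4) * (K * K⁻¹) * EE c Y := by ring
    _ = Y * (Y^2 + 1/4) * EE c Y := by
        rw [mul_inv_cancel₀ (ne_of_gt hK), mul_one]

/-- `K ≤ exp (c (1-2Y))` provided `Y ≤ q` and `K ≤ (1 + 6.283(1-2q)/16)^16`. -/
lemma Kexp_bound {c Y q K : ℝ} (hc : 2 * π ≤ c) (hqY : Y ≤ q) (hq : q ≤ 1/2)
    (hK : K ≤ (1 + 6.283*(1-2*q)/16)^16) : K ≤ Real.exp (c*(1-2*Y)) := by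
  have hpi : (3.141592 : ℝ) < π := Real.pi_gt_d6
  have hc6 : (6.283 : ℝ) ≤ c := by linarith
  have h1 : (0:ℝ) ≤ 6.283*(1-2*q) := by nlinarith
  have h2 : 6.283*(1-2*q) ≤ c*(1-2*Y) := by nlinarith
  have h3 : (1 + 6.283*(1-2*q)/16)^16 ≤ Real.exp (6.283*(1-2*q)) := by
    have h4 := exp_ge_pow (x := 6.283*(1-2*q)) 16 h1 (by norm_num)
    calc (1 + 6.283*(1-2*q)/16)^16 = (1 + 6.283*(1-2*q)/(16:ℕ))^16 := by norm_num
      _ ≤ Real.exp (6.283*(1-2*q)) := h4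
  calc K ≤ (1 + 6.283*(1-2*q)/16)^16 := hK
    _ ≤ Real.exp (6.283*(1-2*q)) := h3
    _ ≤ Real.exp (c*(1-2*Y)) := Real.exp_le_exp.2 h2

end CubicAux3

section CubicAux4
open Real
set_option maxHeartbeats 1600000

lemma b0_nonneg {c Y : ℝ} (hc : 2 * π ≤ c) (hY : 0.08 ≤ Y) (hY2 : Y ≤ 1/2) :
    mm c (1-Y) ≤ mm c Y := by
  have hY0 : (0:ℝ) < Y := by linarith
  rcases le_or_gt Y 0.1 with h | h
  · exact mm_flip hY0 hY2 (by norm_num) (Kexp_bound (K := 79) hc h (by norm_num) (by norm_num))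
      (by nlinarith [mul_nonneg (sub_nonneg.2 hY) (sub_nonneg.2 h)])
  rcases le_or_gt Y 0.12 with h2 | h2
  · exact mm_flip hY0 hY2 (by norm_num) (Kexp_bound (K := 65) hc h2 (by norm_num) (by norm_num))
      (by nlinarith [mul_nonneg (sub_nonneg.2 h.le) (sub_nonneg.2 h2)])
  rcases le_or_gt Y 0.15 with h3 | h3
  · exact mm_flip hY0 hY2 (by norm_num) (Kexp_bound (K := 48) hc h3 (by norm_num) (by norm_num))
      (by nlinarith [mul_nonneg (sub_nonneg.2 h2.le) (sub_nonneg.2 h3)])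
  rcases le_or_gt Y 0.18 with h4 | h4
  · exact mm_flip hY0 hY2 (by norm_num) (Kexp_bound (K := 36) hc h4 (by norm_num) (by norm_num))
      (by nlinarith [mul_nonneg (sub_nonneg.2 h3.le) (sub_nonneg.2 h4)])
  rcases le_or_gt Y 0.22 with h5 | h5
  · exact mm_flip hY0 hY2 (by norm_num) (Kexp_bound (K := 24) hc h5 (by norm_num) (by norm_num))
      (by nlinarith [mul_nonneg (sub_nonneg.2 h4.le) (sub_nonneg.2 h5)])
  rcases le_or_gt Y 0.26 with h6 | h6
  · exact mm_flip hY0 hY2 (by norm_num) (Kexp_bound (K := 15) hc h6 (by norm_num) (by norm_num))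
      (by nlinarith [mul_nonneg (sub_nonneg.2 h5.le) (sub_nonneg.2 h6)])
  rcases le_or_gt Y 0.3 with h7 | h7
  · exact mm_flip hY0 hY2 (by norm_num) (Kexp_bound (K := 10) hc h7 (by norm_num) (by norm_num))
      (by nlinarith [mul_nonneg (sub_nonneg.2 h6.le) (sub_nonneg.2 h7)])
  rcases le_or_gt Y 0.34 with h8 | h8
  · exact mm_flip hY0 hY2 (by norm_num) (Kexp_bound (K := 6.6) hc h8 (by norm_num) (by norm_num))
      (by nlinarith [mul_nonneg (sub_nonneg.2 h7.le) (sub_nonneg.2 h8)])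
  rcases le_or_gt Y 0.38 with h9 | h9
  · exact mm_flip hY0 hY2 (by norm_num) (Kexp_bound (K := 4.2) hc h9 (by norm_num) (by norm_num))
      (by nlinarith [mul_nonneg (sub_nonneg.2 h8.le) (sub_nonneg.2 h9)])
  rcases le_or_gt Y 0.42 with h10 | h10
  · exact mm_flip hY0 hY2 (by norm_num) (Kexp_bound (K := 2.65) hc h10 (by norm_num) (by norm_num))
      (by nlinarith [mul_nonneg (sub_nonneg.2 h9.le) (sub_nonneg.2 h10)])
  -- final piece [0.42, 1/2] with variable K
  · have hpi : (3.141592 : ℝ) < π := Real.pi_gt_d6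
    have hc6 : (6.283 : ℝ) ≤ c := by linarith
    have hd0 : (0:ℝ) ≤ 1-2*Y := by linarith
    apply mm_flip hY0 hY2 (K := 1 + 6.283*(1-2*Y)) (by nlinarith)
    · have h1 : 6.283*(1-2*Y) ≤ c*(1-2*Y) := by nlinarith
      have h2 := Real.add_one_le_exp (c*(1-2*Y))
      linarith
    · have hfact : Y*(Y^2+1/4)*(1 + 6.283*(1-2*Y)) - (1-Y)*((1-Y)^2+1/4)
          = (1/2-Y)*(-(5/2) + (10283/2000)*Y - 2*Y^2 + (6283/500)*Y^3) := by ring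
      have hk : 0 ≤ -(5/2) + (10283/2000)*Y - 2*Y^2 + (6283/500)*Y^3 := by
        nlinarith [mul_nonneg (sub_nonneg.2 h10.le) (sub_nonneg.2 hY2), sq_nonneg (Y-0.42)]
      nlinarith [mul_nonneg (by linarith : (0:ℝ) ≤ 1/2-Y) hk]

end CubicAux4

section CubicAux5
open Real
set_option maxHeartbeats 1000000

lemma exp_inv_le {x b : ℝ} (hb : 0 < b) (h : b ≤ Real.exp x) : Real.exp (-x) ≤ b⁻¹ := by
  rw [Real.exp_neg]
  exact inv_anti₀ hb h

lemma exp5_bound : (148.41 : ℝ) ≤ Real.exp 5 := by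
  have h := Real.exp_one_gt_d9
  have h5 : Real.exp 5 = Real.exp 1 ^ 5 := by rw [← Real.exp_nat_mul]; norm_num
  have : (2.7182818283 : ℝ) ^ 5 ≤ Real.exp 1 ^ 5 := by
    apply pow_le_pow_left₀ (by norm_num) h.le
  nlinarith [this]

lemma exp9_bound : (8103 : ℝ) ≤ Real.exp 9 := by
  have h := Real.exp_one_gt_d9
  have h9 : Real.exp 9 = Real.exp 1 ^ 9 := by rw [← Real.exp_nat_mul]; norm_num
  have : (2.7182818283 : ℝ) ^ 9 ≤ Real.exp 1 ^ 9 := by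
    apply pow_le_pow_left₀ (by norm_num) h.le
  nlinarith [this]

lemma exp23_bound : (50000 : ℝ) ≤ Real.exp 23 := by
  have h := exp_ge_pow (x := 23) 8 (by norm_num) (by norm_num)
  have : ((1:ℝ) + 23/(8:ℕ))^8 = (31/8 : ℝ)^8 := by norm_num
  nlinarith [h, this.le, this.ge]

/-- numeric bound for regime A1. -/
lemma numA1 {c : ℝ} (hc : 2 * π ≤ c) :
    63.48 * Real.exp (-(2.89*c)) ≤ 0.16 * Real.exp (-(0.09*c)) := by
  have hpi : (3.141592 : ℝ) < π := Real.pi_gt_d6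
  have hc6 : (6.283 : ℝ) ≤ c := by linarith
  have h1 : Real.exp (-(2.89*c)) = Real.exp (-(0.09*c)) * Real.exp (-(2.8*c)) := by
    rw [← Real.exp_add]; ring_nf
  have h2 : ((1:ℝ) + 2.8*c/(4:ℕ))^4 ≤ Real.exp (2.8*c) :=
    exp_ge_pow 4 (by nlinarith) (by norm_num)
  have h3 : (396.76 : ℝ) ≤ Real.exp (2.8*c) := by
    have h4 : (5.39810 : ℝ) ≤ 1 + 2.8*c/(4:ℕ) := by
      push_cast
      nlinarith
    have h5 : (5.39810 : ℝ)^4 ≤ (1 + 2.8*c/(4:ℕ))^4 := by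
      apply pow_le_pow_left₀ (by norm_num) h4
    nlinarith [h5, h2]
  have h6 : Real.exp (-(2.8*c)) ≤ (396.76 : ℝ)⁻¹ := exp_inv_le (by norm_num) h3
  have hE := Real.exp_pos (-(0.09*c))
  rw [h1]
  calc 63.48 * (Real.exp (-(0.09*c)) * Real.exp (-(2.8*c)))
      = (63.48 * Real.exp (-(2.8*c))) * Real.exp (-(0.09*c)) := by ring
    _ ≤ (63.48 * (396.76 : ℝ)⁻¹) * Real.exp (-(0.09*c)) := by
        apply mul_le_mul_of_nonneg_right _ hE.le
        nlinarith [h6]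
    _ ≤ 0.16 * Real.exp (-(0.09*c)) := by
        apply mul_le_mul_of_nonneg_right _ hE.le
        norm_num

/-- numeric bound for regime A2. -/
lemma numA2 {c : ℝ} (hc : 2 * π ≤ c) :
    20.25 * c * Real.exp (-(1.69*c)) ≤ 0.12 * Real.exp (-(c/4)) := by
  have hpi : (3.141592 : ℝ) < π := Real.pi_gt_d6
  have hpi2 : π < 3.15 := Real.pi_lt_d2
  have hc6 : (6.283 : ℝ) ≤ c := by linarith
  have key : c * Real.exp (-(1.44*c)) ≤ (2*π) * Real.exp (-(1.44*(2*π))) :=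
    c_exp_le (by positivity) hc (by nlinarith)
  have h1 : Real.exp (-(1.69*c)) = Real.exp (-(1.44*c)) * Real.exp (-(c/4)) := by
    rw [← Real.exp_add]; ring_nf
  have h2 : Real.exp (-(1.44*(2*π))) ≤ (8103:ℝ)⁻¹ := by
    apply exp_inv_le (by norm_num)
    calc (8103:ℝ) ≤ Real.exp 9 := exp9_bound
      _ ≤ Real.exp (1.44*(2*π)) := Real.exp_le_exp.2 (by nlinarith)
  have hE := Real.exp_pos (-(c/4))
  have h3 : c * Real.exp (-(1.44*c)) ≤ 6.3 * (8103:ℝ)⁻¹ := by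
    calc c * Real.exp (-(1.44*c)) ≤ (2*π) * Real.exp (-(1.44*(2*π))) := key
      _ ≤ 6.3 * (8103:ℝ)⁻¹ := by
          apply mul_le_mul (by linarith) h2 (Real.exp_pos _).le (by norm_num)
  calc 20.25 * c * Real.exp (-(1.69*c))
      = 20.25 * (c * Real.exp (-(1.44*c))) * Real.exp (-(c/4)) := by rw [h1]; ring
    _ ≤ 20.25 * (6.3 * (8103:ℝ)⁻¹) * Real.exp (-(c/4)) := by
        apply mul_le_mul_of_nonneg_right _ hE.le
        nlinarith [h3]
    _ ≤ 0.12 * Real.exp (-(c/4)) := by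
        apply mul_le_mul_of_nonneg_right _ hE.le
        norm_num

/-- numeric bound for regime B1. -/
lemma numB1 {c : ℝ} (hc : 2 * π ≤ c) :
    6.12 * c * Real.exp (-(0.84*c)) + 187.44 * c * Real.exp (-(3.68*c)) ≤ 1/4 := by
  have hpi : (3.141592 : ℝ) < π := Real.pi_gt_d6
  have hpi2 : π < 3.15 := Real.pi_lt_d2
  have hc6 : (6.283 : ℝ) ≤ c := by linarith
  have key1 : c * Real.exp (-(0.84*c)) ≤ (2*π) * Real.exp (-(0.84*(2*π))) :=
    c_exp_le (by positivity) hc (by nlinarith)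
  have key2 : c * Real.exp (-(3.68*c)) ≤ (2*π) * Real.exp (-(3.68*(2*π))) :=
    c_exp_le (by positivity) hc (by nlinarith)
  have h189 : (189:ℝ) ≤ Real.exp (0.84*(2*π)) := by
    have e1 : Real.exp (5.277) = Real.exp 5 * Real.exp (0.277) := by
      rw [← Real.exp_add]; norm_num
    have e2 : (1.277 : ℝ) ≤ Real.exp (0.277) := by
      have := Real.add_one_le_exp (0.277 : ℝ); linarith
    have e3 : (189:ℝ) ≤ Real.exp (5.277) := by
      rw [e1]
      nlinarith [exp5_bound, Real.exp_pos (0.277:ℝ)]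
    calc (189:ℝ) ≤ Real.exp 5.277 := e3
      _ ≤ Real.exp (0.84*(2*π)) := Real.exp_le_exp.2 (by nlinarith)
  have h50000 : (50000:ℝ) ≤ Real.exp (3.68*(2*π)) := by
    calc (50000:ℝ) ≤ Real.exp 23 := exp23_bound
      _ ≤ Real.exp (3.68*(2*π)) := Real.exp_le_exp.2 (by nlinarith)
  have b1 : c * Real.exp (-(0.84*c)) ≤ 6.3 * (189:ℝ)⁻¹ := by
    calc c * Real.exp (-(0.84*c)) ≤ (2*π) * Real.exp (-(0.84*(2*π))) := key1
      _ ≤ 6.3 * (189:ℝ)⁻¹ := by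
          apply mul_le_mul (by linarith) (exp_inv_le (by norm_num) h189) (Real.exp_pos _).le (by norm_num)
  have b2 : c * Real.exp (-(3.68*c)) ≤ 6.3 * (50000:ℝ)⁻¹ := by
    calc c * Real.exp (-(3.68*c)) ≤ (2*π) * Real.exp (-(3.68*(2*π))) := key2
      _ ≤ 6.3 * (50000:ℝ)⁻¹ := by
          apply mul_le_mul (by linarith) (exp_inv_le (by norm_num) h50000) (Real.exp_pos _).le (by norm_num)
  nlinarith [b1, b2]

/-- geometric lower bound for a tsum. -/
lemma tsum_ge_neg_geo {a : ℕ → ℝ} (ha : Summable a) {T ρ : ℝ} (hT : 0 ≤ T)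
    (hρ0 : 0 ≤ ρ) (hρ : ρ ≤ 1/2) (h : ∀ n, -(T*ρ^n) ≤ a n) :
    -(2*T) ≤ ∑' n, a n := by
  have hg : Summable (fun n : ℕ => ρ^n) := summable_geometric_of_lt_one hρ0 (by linarith)
  have hg2 : Summable (fun n : ℕ => -(T * ρ^n)) := ((hg.mul_left T).neg)
  have h1 : ∑' n : ℕ, -(T * ρ^n) ≤ ∑' n, a n := Summable.tsum_le_tsum h hg2 ha
  have h2 : ∑' n : ℕ, -(T * ρ^n) = -(T * (1-ρ)⁻¹) := by
    rw [tsum_neg, tsum_mul_left, tsum_geometric_of_lt_one hρ0 (by linarith)]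
  have h3 : (1-ρ)⁻¹ ≤ 2 := by
    rw [inv_le_comm₀ (by linarith) (by norm_num)]
    linarith
  have h4 : T * (1-ρ)⁻¹ ≤ 2*T := by nlinarith
  linarith

/-- geometric upper bound for a tsum. -/
lemma tsum_le_geo {a : ℕ → ℝ} (ha : Summable a) {T ρ : ℝ} (hT : 0 ≤ T)
    (hρ0 : 0 ≤ ρ) (hρ : ρ ≤ 1/2) (h : ∀ n, a n ≤ T*ρ^n) :
    ∑' n, a n ≤ 2*T := by
  have hg : Summable (fun n : ℕ => ρ^n) := summable_geometric_of_lt_one hρ0 (by linarith)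
  have h1 : ∑' n, a n ≤ ∑' n : ℕ, T * ρ^n := Summable.tsum_le_tsum h ha (hg.mul_left T)
  have h2 : ∑' n : ℕ, T * ρ^n = T * (1-ρ)⁻¹ := by
    rw [tsum_mul_left, tsum_geometric_of_lt_one hρ0 (by linarith)]
  have h3 : (1-ρ)⁻¹ ≤ 2 := by
    rw [inv_le_comm₀ (by linarith) (by norm_num)]
    linarith
  nlinarith [h1, h2.le, h2.ge]

end CubicAux5

section CubicAux6
open Real
set_option maxHeartbeats 1000000

lemma summable_gg_fam {c : ℝ} (hc : 6 ≤ c) {b : ℝ} (hb0 : 0 ≤ b) (hb : b ≤ 2) :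
    Summable (fun n : ℕ => gg c ((n:ℝ) + b)) := by
  apply summable_dom
  intro n
  have ht0 : (0:ℝ) ≤ (n:ℝ) + b := by positivity
  calc |gg c ((n:ℝ)+b)| ≤ |(n:ℝ)+b| * (((n:ℝ)+b)^2 + 1) * EE c ((n:ℝ)+b) := abs_gg_le _ _
    _ = ((n:ℝ)+b) * (((n:ℝ)+b)^2 + 1) * Real.exp (-(c * ((n:ℝ)+b)^2)) := by
        rw [abs_of_nonneg ht0]; rfl
    _ ≤ 16 * (1/2:ℝ)^n := dom_main hc n (by linarith) (by linarith)

lemma summable_mm_fam {c : ℝ} (hc : 6 ≤ c) {b : ℝ} (hb0 : 0 ≤ b) (hb : b ≤ 2) :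
    Summable (fun n : ℕ => mm c ((n:ℝ) + b)) := by
  apply summable_dom
  intro n
  have ht0 : (0:ℝ) ≤ (n:ℝ) + b := by positivity
  calc |mm c ((n:ℝ)+b)| ≤ |(n:ℝ)+b| * (((n:ℝ)+b)^2 + 1) * EE c ((n:ℝ)+b) := abs_mm_le _ _
    _ = ((n:ℝ)+b) * (((n:ℝ)+b)^2 + 1) * Real.exp (-(c * ((n:ℝ)+b)^2)) := by
        rw [abs_of_nonneg ht0]; rfl
    _ ≤ 16 * (1/2:ℝ)^n := dom_main hc n (by linarith) (by linarith)

lemma int_fam_congr1 (F : ℝ → ℝ) (Y : ℝ) (n : ℕ) :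
    F (((((n:ℤ)) + 1 : ℤ) : ℝ) - Y) = F ((n:ℝ) + (1-Y)) := by
  congr 1; push_cast; ring

lemma int_fam_congr2 (F : ℝ → ℝ) (hodd : ∀ t, F (-t) = -F t) (Y : ℝ) (n : ℕ) :
    F ((((-((n:ℤ) + 1)) : ℤ) : ℝ) - Y) = -F ((n:ℝ) + (1+Y)) := by
  have h : ((((-((n:ℤ) + 1)) : ℤ) : ℝ)) - Y = -((n:ℝ) + (1+Y)) := by push_cast; ring
  rw [h, hodd]

lemma int_summable (F : ℝ → ℝ) (hodd : ∀ t, F (-t) = -F t) (Y : ℝ)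
    (h1 : Summable fun n : ℕ => F ((n:ℝ) + (1-Y)))
    (h2 : Summable fun n : ℕ => F ((n:ℝ) + (1+Y))) :
    Summable (fun n : ℤ => F ((n:ℝ) - Y)) := by
  apply Summable.of_add_one_of_neg_add_one
  · exact h1.congr (fun n => (int_fam_congr1 F Y n).symm)
  · exact h2.neg.congr (fun n => (int_fam_congr2 F hodd Y n).symm)

lemma int_split (F : ℝ → ℝ) (hodd : ∀ t, F (-t) = -F t) (Y : ℝ)
    (h1 : Summable fun n : ℕ => F ((n:ℝ) + (1-Y)))
    (h2 : Summable fun n : ℕ => F ((n:ℝ) + (1+Y))) :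
    ∑' n : ℤ, F ((n:ℝ) - Y)
      = -F Y + ((∑' n : ℕ, F ((n:ℝ) + (1-Y))) - ∑' n : ℕ, F ((n:ℝ) + (1+Y))) := by
  have h1' : Summable fun n : ℕ => F ((((n:ℤ) + 1 : ℤ) : ℝ) - Y) :=
    h1.congr (fun n => (int_fam_congr1 F Y n).symm)
  have h2' : Summable fun n : ℕ => F ((((-((n:ℤ) + 1)) : ℤ) : ℝ) - Y) :=
    h2.neg.congr (fun n => (int_fam_congr2 F hodd Y n).symm)
  have key := tsum_of_add_one_of_neg_add_one (f := fun n : ℤ => F ((n:ℝ) - Y)) h1' h2'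
  rw [key]
  have e1 : ∑' n : ℕ, F ((((n:ℤ) + 1 : ℤ) : ℝ) - Y) = ∑' n : ℕ, F ((n:ℝ) + (1-Y)) :=
    tsum_congr (fun n => int_fam_congr1 F Y n)
  have e2 : ∑' n : ℕ, F ((((-((n:ℤ) + 1)) : ℤ) : ℝ) - Y) = -∑' n : ℕ, F ((n:ℝ) + (1+Y)) := by
    rw [← tsum_neg]
    exact tsum_congr (fun n => int_fam_congr2 F hodd Y n)
  have e0 : (fun n : ℤ => F ((n:ℝ) - Y)) 0 = -F Y := by
    show F (((0:ℤ):ℝ) - Y) = -F Y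
    have h : (((0:ℤ):ℝ)) - Y = -Y := by push_cast; ring
    rw [h, hodd]
  rw [e1, e2, show F (((0:ℤ):ℝ) - Y) = -F Y from e0]
  ring

/-- shift the second family's index inside the tsum: `∑ F(n+(1-Y)) = F(1-Y) + ∑ F(n+(2-Y))`. -/
lemma shift_one (F : ℝ → ℝ) (b : ℝ) (h : Summable fun n : ℕ => F ((n:ℝ) + b)) :
    ∑' n : ℕ, F ((n:ℝ) + b) = F b + ∑' n : ℕ, F ((n:ℝ) + (1+b)) := by
  rw [Summable.tsum_eq_zero_add h]
  congr 1
  · norm_num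
  · apply tsum_congr
    intro n
    congr 1
    push_cast; ring

end CubicAux6

section CubicAux7
open Real
set_option maxHeartbeats 2000000

/-- per-term bound for the tail in regime A1 -/
lemma A1_term {c Y : ℝ} (hc6 : (6:ℝ) ≤ c) (hY0 : 0 < Y) (hY : Y ≤ 0.3) (n : ℕ) :
    -((31.74*Y*Real.exp (-(2.89*c))) * (4*Real.exp (-(3.4*c)))^n)
      ≤ gg c (((n:ℝ)+2)-Y) - gg c (((n:ℝ)+2)+Y) := by
  have hcpos : (0:ℝ) < c := by linarith
  have hn0 : (0:ℝ) ≤ (n:ℝ) := Nat.cast_nonneg n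
  have hw0 : (0:ℝ) ≤ ((n:ℝ)+2)-Y := by linarith
  have hwv : ((n:ℝ)+2)-Y ≤ ((n:ℝ)+2)+Y := by linarith
  have hv12 : (1:ℝ)/2 ≤ ((n:ℝ)+2)+Y := by linarith
  have hlow := gdiff_lower2 hcpos hw0 hwv hv12
  refine le_trans ?_ hlow
  rw [neg_le_neg_iff]
  have hE1 : EE c (((n:ℝ)+2)-Y) ≤ EE c ((n:ℝ)+1.7) := by
    apply EE_mono hcpos.le
    nlinarith
  have hE2 : EE c ((n:ℝ)+1.7) ≤ Real.exp (-(2.89*c)) * (Real.exp (-(3.4*c)))^n := by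
    rw [EE]
    have e3 : Real.exp (-(2.89*c)) * (Real.exp (-(3.4*c)))^n
        = Real.exp (-(2.89*c) + (n:ℝ)*(-(3.4*c))) := by
      rw [Real.exp_add, Real.exp_nat_mul]
    rw [e3]
    apply Real.exp_le_exp.2
    nlinarith [sq_nonneg (n:ℝ)]
  have hp : (n:ℝ) + 2.3 ≤ 2.3*2^n := nat_add_le_two_pow n 2.3 (by norm_num) (by norm_num)
  have hvsq : (((n:ℝ)+2)+Y)^2 ≤ 5.29 * 4^n := by
    have h4 : ((2:ℝ)^n)^2 = 4^n := by rw [← pow_mul, pow_mul']; norm_num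
    have hvle : ((n:ℝ)+2)+Y ≤ 2.3*2^n := by linarith
    calc (((n:ℝ)+2)+Y)^2 ≤ (2.3*2^n)^2 := by
          apply pow_le_pow_left₀ (by linarith) hvle
      _ = 5.29 * 4^n := by rw [mul_pow, h4]; norm_num
  have hEw : (0:ℝ) ≤ EE c (((n:ℝ)+2)-Y) := EE_nonneg _ _
  calc 3*(((n:ℝ)+2)+Y)^2*((((n:ℝ)+2)+Y) - (((n:ℝ)+2)-Y))*EE c (((n:ℝ)+2)-Y)
      = 6*Y*((((n:ℝ)+2)+Y)^2*EE c (((n:ℝ)+2)-Y)) := by ring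
    _ ≤ 6*Y*((5.29*4^n)*(Real.exp (-(2.89*c)) * (Real.exp (-(3.4*c)))^n)) := by
        apply mul_le_mul_of_nonneg_left _ (by linarith : (0:ℝ) ≤ 6*Y)
        apply mul_le_mul hvsq (le_trans hE1 hE2) hEw (by positivity)
    _ = (31.74*Y*Real.exp (-(2.89*c))) * (4*Real.exp (-(3.4*c)))^n := by
        rw [mul_pow]; ring

/-- per-term bound for the tail in regime A2 -/
lemma A2_term {c Y : ℝ} (hc6 : (6:ℝ) ≤ c) (hY0 : 0 < Y) (hY : Y ≤ 1/2) (hreg : 0.3 ≤ Y) (n : ℕ) :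
    -((10.125*c*(1-2*Y)*Real.exp (-(1.69*c))) * (16*Real.exp (-(3.6*c)))^n)
      ≤ gg c ((n:ℝ) + (1+(1-Y))) - gg c ((n:ℝ)+(1+Y)) := by
  have hcpos : (0:ℝ) < c := by linarith
  have hn0 : (0:ℝ) ≤ (n:ℝ) := Nat.cast_nonneg n
  have hw12 : (1:ℝ)/2 ≤ (n:ℝ)+(1+Y) := by linarith
  have hwv : (n:ℝ)+(1+Y) ≤ (n:ℝ)+(1+(1-Y)) := by linarith
  have hlow := gdiff_lower1 hcpos hw12 hwv
  refine le_trans ?_ hlow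
  rw [neg_le_neg_iff]
  have hsq : ((n:ℝ)+(1+(1-Y)))^2 - ((n:ℝ)+(1+Y))^2 = (1-2*Y)*(2*(n:ℝ)+3) := by ring
  have hcube : ((n:ℝ)+(1+Y))*(((n:ℝ)+(1+Y))^2-1/4) ≤ ((n:ℝ)+1.5)^3 := by
    have h3 : ((n:ℝ)+(1+Y))^3 ≤ ((n:ℝ)+1.5)^3 :=
      pow_le_pow_left₀ (by linarith) (by linarith) 3
    nlinarith [h3]
  have hE1 : EE c ((n:ℝ)+(1+Y)) ≤ EE c ((n:ℝ)+1.3) := by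
    apply EE_mono hcpos.le
    nlinarith
  have hE2 : EE c ((n:ℝ)+1.3) ≤ Real.exp (-(1.69*c)) * (Real.exp (-(3.6*c)))^n := by
    rw [EE]
    have e3 : Real.exp (-(1.69*c)) * (Real.exp (-(3.6*c)))^n
        = Real.exp (-(1.69*c) + (n:ℝ)*(-(3.6*c))) := by
      rw [Real.exp_add, Real.exp_nat_mul]
    rw [e3]
    apply Real.exp_le_exp.2
    nlinarith [sq_nat_le n]
  have hp : (n:ℝ) + 1.5 ≤ 1.5*2^n := nat_add_le_two_pow n 1.5 (by norm_num) (by norm_num)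
  have hpow : ((n:ℝ)+1.5)^4 ≤ 5.0625*16^n := by
    have h16 : ((2:ℝ)^n)^4 = 16^n := by rw [← pow_mul, pow_mul']; norm_num
    calc ((n:ℝ)+1.5)^4 ≤ (1.5*2^n)^4 := by
          apply pow_le_pow_left₀ (by linarith) hp
      _ = 5.0625*16^n := by rw [mul_pow, h16]; norm_num
  have hd0 : (0:ℝ) ≤ 1-2*Y := by linarith
  have hwcub0 : (0:ℝ) ≤ ((n:ℝ)+(1+Y))*(((n:ℝ)+(1+Y))^2-1/4) := by nlinarith
  have hEw : (0:ℝ) ≤ EE c ((n:ℝ)+(1+Y)) := EE_nonneg _ _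
  calc ((n:ℝ)+(1+Y))*(((n:ℝ)+(1+Y))^2-1/4) * EE c ((n:ℝ)+(1+Y))
        * (c*(((n:ℝ)+(1+(1-Y)))^2 - ((n:ℝ)+(1+Y))^2))
      = (c*(1-2*Y)) * ((((n:ℝ)+(1+Y))*(((n:ℝ)+(1+Y))^2-1/4)*(2*(n:ℝ)+3))
          * EE c ((n:ℝ)+(1+Y))) := by rw [hsq]; ring
    _ ≤ (c*(1-2*Y)) * ((2*(5.0625*16^n)) * (Real.exp (-(1.69*c)) * (Real.exp (-(3.6*c)))^n)) := by
        apply mul_le_mul_of_nonneg_left _ (mul_nonneg hcpos.le hd0)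
        apply mul_le_mul _ (le_trans hE1 hE2) hEw (by positivity)
        calc ((n:ℝ)+(1+Y))*(((n:ℝ)+(1+Y))^2-1/4)*(2*(n:ℝ)+3) ≤ ((n:ℝ)+1.5)^3*(2*(n:ℝ)+3) := by
              apply mul_le_mul_of_nonneg_right hcube (by linarith)
          _ = 2*((n:ℝ)+1.5)^4 := by ring
          _ ≤ 2*(5.0625*16^n) := by linarith
    _ = (10.125*c*(1-2*Y)*Real.exp (-(1.69*c))) * (16*Real.exp (-(3.6*c)))^n := by
        rw [mul_pow]; ring

lemma A_nonneg {c Y : ℝ} (hc : 2*π ≤ c) (hY0 : 0 < Y) (hY : Y ≤ 1/2) :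
    0 ≤ ∑' n : ℤ, gg c ((n:ℝ) - Y) := by
  have hpi : (3.141592 : ℝ) < π := Real.pi_gt_d6
  have hc6 : (6:ℝ) ≤ c := by linarith
  have hcpos : (0:ℝ) < c := by linarith
  have h1 : Summable fun n : ℕ => gg c ((n:ℝ) + (1-Y)) :=
    summable_gg_fam hc6 (by linarith) (by linarith)
  have h2 : Summable fun n : ℕ => gg c ((n:ℝ) + (1+Y)) :=
    summable_gg_fam hc6 (by linarith) (by linarith)
  rw [int_split (gg c) (gg_neg c) Y h1 h2]
  rcases le_or_gt Y 0.3 with hreg | hreg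
  · -- regime A1 : 0 < Y ≤ 0.3
    rw [← Summable.tsum_sub h1 h2]
    set D : ℕ → ℝ := fun n => gg c ((n:ℝ)+(1-Y)) - gg c ((n:ℝ)+(1+Y)) with hD
    have hDsum : Summable D := h1.sub h2
    rw [Summable.tsum_eq_zero_add hDsum]
    have hD0 : 0 ≤ D 0 := by
      show (0:ℝ) ≤ gg c (((0:ℕ):ℝ)+(1-Y)) - gg c (((0:ℕ):ℝ)+(1+Y))
      simp only [Nat.cast_zero, zero_add]
      exact sub_nonneg.2 (br0_nonneg hc hY0.le hreg)
    have hterm : ∀ n : ℕ,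
        -((31.74*Y*Real.exp (-(2.89*c))) * (4*Real.exp (-(3.4*c)))^n) ≤ D (n+1) := by
      intro n
      have e1 : ((((n+1):ℕ):ℝ)) + (1-Y) = ((n:ℝ)+2)-Y := by push_cast; ring
      have e2 : ((((n+1):ℕ):ℝ)) + (1+Y) = ((n:ℝ)+2)+Y := by push_cast; ring
      show _ ≤ gg c ((((n+1):ℕ):ℝ)+(1-Y)) - gg c ((((n+1):ℕ):ℝ)+(1+Y))
      rw [e1, e2]
      exact A1_term hc6 hY0 hreg n
    have hrho : (4*Real.exp (-(3.4*c))) ≤ 1/2 := by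
      have h8 : (8:ℝ) ≤ Real.exp (3.4*c) := by
        have := Real.add_one_le_exp (3.4*c); nlinarith
      have h9 := exp_inv_le (show (0:ℝ) < 8 by norm_num) h8
      norm_num at h9 ⊢
      linarith
    have htail := tsum_ge_neg_geo ((summable_nat_add_iff 1).2 hDsum)
      (by positivity : (0:ℝ) ≤ 31.74*Y*Real.exp (-(2.89*c)))
      (by positivity : (0:ℝ) ≤ 4*Real.exp (-(3.4*c))) hrho hterm
    have hsurp : 0.16*Y*Real.exp (-(0.09*c)) ≤ -gg c Y := by
      rw [gg]
      have hE : Real.exp (-(0.09*c)) ≤ EE c Y := by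
        rw [EE]; apply Real.exp_le_exp.2
        nlinarith [mul_le_mul_of_nonneg_left (show Y^2 ≤ 0.09 by nlinarith) hcpos.le]
      have h14 : (0.16:ℝ) ≤ 1/4 - Y^2 := by nlinarith
      have hkey : 0.16 * Real.exp (-(0.09*c)) ≤ (1/4-Y^2) * EE c Y := by
        apply mul_le_mul h14 hE (Real.exp_pos _).le (by linarith)
      nlinarith [mul_le_mul_of_nonneg_left hkey hY0.le, EE_nonneg c Y]
    have hnum := numA1 hc
    have hnumY := mul_le_mul_of_nonneg_left hnum hY0.le
    linarith [htail, hD0, hsurp, hnumY]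
  · -- regime A2 : 0.3 < Y ≤ 1/2
    rw [shift_one (gg c) (1-Y) h1]
    have h1' : Summable fun n : ℕ => gg c ((n:ℝ) + (1+(1-Y))) :=
      summable_gg_fam hc6 (by linarith) (by linarith)
    have hsub := Summable.tsum_sub h1' h2
    have hrho : (16*Real.exp (-(3.6*c))) ≤ 1/2 := by
      have hq := exp_ge_pow (x := 3.6*c) 2 (by positivity) (by norm_num)
      have h11 : (11.8:ℝ) ≤ 1 + 3.6*c/(2:ℕ) := by push_cast; nlinarith
      have h32 : (32:ℝ) ≤ Real.exp (3.6*c) := by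
        nlinarith [hq, pow_le_pow_left₀ (show (0:ℝ) ≤ 11.8 by norm_num) h11 2]
      have h9 := exp_inv_le (show (0:ℝ) < 32 by norm_num) h32
      norm_num at h9 ⊢
      linarith
    have hd0 : (0:ℝ) ≤ 1-2*Y := by linarith
    have hT0 : (0:ℝ) ≤ 10.125*c*(1-2*Y)*Real.exp (-(1.69*c)) := by
      apply mul_nonneg (mul_nonneg (by positivity) hd0) (Real.exp_pos _).le
    have htail := tsum_ge_neg_geo (h1'.sub h2) hT0
      (by positivity : (0:ℝ) ≤ 16*Real.exp (-(3.6*c))) hrho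
      (fun n => A2_term hc6 hY0 hY hreg.le n)
    have hsurp : 0.12*(1-2*Y)*Real.exp (-(c/4)) ≤ -gg c Y := by
      rw [gg]
      have hE : Real.exp (-(c/4)) ≤ EE c Y := by
        rw [EE]; apply Real.exp_le_exp.2
        nlinarith [mul_le_mul_of_nonneg_left (show Y^2 ≤ 1/4 by nlinarith) hcpos.le]
      have h1a : (0.24:ℝ) ≤ Y*(1/2+Y) := by nlinarith
      have h2a : (1/2-Y) * Real.exp (-(c/4)) ≤ (1/2-Y) * EE c Y :=
        mul_le_mul_of_nonneg_left hE (by linarith)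
      have h3a : (0:ℝ) ≤ (1/2-Y) * Real.exp (-(c/4)) :=
        mul_nonneg (by linarith) (Real.exp_pos _).le
      have h4a := mul_le_mul h1a h2a h3a (by nlinarith : (0:ℝ) ≤ Y*(1/2+Y))
      nlinarith [h4a]
    have hg1Y : 0 ≤ gg c (1-Y) := by
      rw [gg]
      have h5 : (0:ℝ) ≤ (1-Y)*((1-Y)^2-1/4) := by nlinarith
      exact mul_nonneg h5 (EE_nonneg _ _)
    have hnum := numA2 hc
    have hnumd := mul_le_mul_of_nonneg_left hnum hd0
    linarith [htail, hsurp, hg1Y, hnumd, hsub]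

end CubicAux7

section CubicAux8
open Real
set_option maxHeartbeats 2000000

lemma B1_term0 {c Y : ℝ} (hc6 : (6:ℝ) ≤ c) (hY0 : 0 < Y) (hY : Y ≤ 0.08) :
    mm c (1-Y) - mm c (1+Y) ≤ 6.12*c*Y*(EE c Y)*Real.exp (-(0.84*c)) := by
  have hcpos : (0:ℝ) < c := by linarith
  have hup := mdiff_upper hcpos (by linarith : (0:ℝ) ≤ 1-Y) (by linarith : (1:ℝ)-Y ≤ 1+Y)
  refine le_trans hup ?_
  have hsq : (1+Y)^2 - (1-Y)^2 = 4*Y := by ring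
  have hcube : (1+Y)*((1+Y)^2+1/4) ≤ 1.53 := by nlinarith
  have hEfac : EE c (1-Y) = EE c Y * Real.exp (-(c*((1-Y)^2 - Y^2))) := EE_factor c Y (1-Y)
  have hE2 : Real.exp (-(c*((1-Y)^2 - Y^2))) ≤ Real.exp (-(0.84*c)) := by
    apply Real.exp_le_exp.2
    nlinarith [mul_le_mul_of_nonneg_left (show (0.84:ℝ) ≤ (1-Y)^2 - Y^2 by nlinarith) hcpos.le]
  have hEw : EE c (1-Y) ≤ EE c Y * Real.exp (-(0.84*c)) := by
    rw [hEfac]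
    apply mul_le_mul_of_nonneg_left hE2 (EE_nonneg _ _)
  have hc4Y : (0:ℝ) ≤ c*(4*Y) := by positivity
  calc (1+Y)*((1+Y)^2+1/4) * EE c (1-Y) * (c*((1+Y)^2-(1-Y)^2))
      = ((1+Y)*((1+Y)^2+1/4)) * (EE c (1-Y)) * (c*(4*Y)) := by rw [hsq]
    _ ≤ 1.53 * (EE c Y * Real.exp (-(0.84*c))) * (c*(4*Y)) := by
        apply mul_le_mul_of_nonneg_right _ hc4Y
        apply mul_le_mul hcube hEw (EE_nonneg _ _) (by norm_num)
    _ = 6.12*c*Y*(EE c Y)*Real.exp (-(0.84*c)) := by ring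

lemma B1_termS {c Y : ℝ} (hc6 : (6:ℝ) ≤ c) (hY0 : 0 < Y) (hY : Y ≤ 0.08) (n : ℕ) :
    mm c (((n:ℝ)+2)-Y) - mm c (((n:ℝ)+2)+Y)
      ≤ (93.72*c*Real.exp (-(3.68*c))*Y*(EE c Y)) * (16*Real.exp (-(3.84*c)))^n := by
  have hcpos : (0:ℝ) < c := by linarith
  have hn0 : (0:ℝ) ≤ (n:ℝ) := Nat.cast_nonneg n
  have hup := mdiff_upper hcpos (by linarith : (0:ℝ) ≤ ((n:ℝ)+2)-Y)
    (by linarith : ((n:ℝ)+2)-Y ≤ ((n:ℝ)+2)+Y)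
  refine le_trans hup ?_
  have hsq : (((n:ℝ)+2)+Y)^2 - (((n:ℝ)+2)-Y)^2 = 4*Y*((n:ℝ)+2) := by ring
  -- polynomial part
  have hcube : ((((n:ℝ)+2)+Y)*((((n:ℝ)+2)+Y)^2+1/4)) * ((n:ℝ)+2) ≤ ((n:ℝ)+2.2)^4 := by
    have hv : ((n:ℝ)+2)+Y ≤ (n:ℝ)+2.08 := by linarith
    have h1 : (((n:ℝ)+2)+Y)*((((n:ℝ)+2)+Y)^2+1/4) ≤ ((n:ℝ)+2.08)*(((n:ℝ)+2.08)^2+1/4) := by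
      apply mul_le_mul hv (by nlinarith) (by nlinarith) (by linarith)
    have h2 : ((n:ℝ)+2.08)*(((n:ℝ)+2.08)^2+1/4) * ((n:ℝ)+2) ≤ ((n:ℝ)+2.2)^4 := by
      nlinarith [sq_nonneg ((n:ℝ)), hn0]
    calc ((((n:ℝ)+2)+Y)*((((n:ℝ)+2)+Y)^2+1/4)) * ((n:ℝ)+2)
        ≤ (((n:ℝ)+2.08)*(((n:ℝ)+2.08)^2+1/4)) * ((n:ℝ)+2) := by
          apply mul_le_mul_of_nonneg_right h1 (by linarith)
      _ ≤ ((n:ℝ)+2.2)^4 := h2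
  have hpow : ((n:ℝ)+2.2)^4 ≤ 23.4256*16^n := by
    have hp : (n:ℝ) + 2.2 ≤ 2.2*2^n := nat_add_le_two_pow n 2.2 (by norm_num) (by norm_num)
    have h16 : ((2:ℝ)^n)^4 = 16^n := by rw [← pow_mul, pow_mul']; norm_num
    calc ((n:ℝ)+2.2)^4 ≤ (2.2*2^n)^4 := by
          apply pow_le_pow_left₀ (by linarith) hp
      _ = 23.4256*16^n := by rw [mul_pow, h16]; norm_num
  -- exponential part
  have hEfac : EE c (((n:ℝ)+2)-Y) = EE c Y * Real.exp (-(c*((((n:ℝ)+2)-Y)^2 - Y^2))) :=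
    EE_factor c Y (((n:ℝ)+2)-Y)
  have hE2 : Real.exp (-(c*((((n:ℝ)+2)-Y)^2 - Y^2)))
      ≤ Real.exp (-(3.68*c)) * (Real.exp (-(3.84*c)))^n := by
    have e3 : Real.exp (-(3.68*c)) * (Real.exp (-(3.84*c)))^n
        = Real.exp (-(3.68*c) + (n:ℝ)*(-(3.84*c))) := by
      rw [Real.exp_add, Real.exp_nat_mul]
    rw [e3]
    apply Real.exp_le_exp.2
    have hkey : 3.68 + 3.84*(n:ℝ) ≤ (((n:ℝ)+2)-Y)^2 - Y^2 := by
      nlinarith [sq_nonneg (n:ℝ)]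
    nlinarith [mul_le_mul_of_nonneg_left hkey hcpos.le]
  have hEw : EE c (((n:ℝ)+2)-Y) ≤ EE c Y * (Real.exp (-(3.68*c)) * (Real.exp (-(3.84*c)))^n) := by
    rw [hEfac]
    apply mul_le_mul_of_nonneg_left hE2 (EE_nonneg _ _)
  have hvpos : (0:ℝ) ≤ (((n:ℝ)+2)+Y)*((((n:ℝ)+2)+Y)^2+1/4) := by nlinarith
  calc (((n:ℝ)+2)+Y)*((((n:ℝ)+2)+Y)^2+1/4) * EE c (((n:ℝ)+2)-Y)
        * (c*((((n:ℝ)+2)+Y)^2-(((n:ℝ)+2)-Y)^2))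
      = (4*c*Y) * (((((n:ℝ)+2)+Y)*((((n:ℝ)+2)+Y)^2+1/4) * ((n:ℝ)+2)) * EE c (((n:ℝ)+2)-Y)) := by
        rw [hsq]; ring
    _ ≤ (4*c*Y) * ((23.4256*16^n) * (EE c Y * (Real.exp (-(3.68*c)) * (Real.exp (-(3.84*c)))^n))) := by
        apply mul_le_mul_of_nonneg_left _ (by positivity)
        apply mul_le_mul (le_trans hcube hpow) hEw (EE_nonneg _ _) (by positivity)
    _ = (93.7024*c*Real.exp (-(3.68*c))*Y*(EE c Y)) * (16*Real.exp (-(3.84*c)))^n := by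
        rw [mul_pow]; ring
    _ ≤ (93.72*c*Real.exp (-(3.68*c))*Y*(EE c Y)) * (16*Real.exp (-(3.84*c)))^n := by
        apply mul_le_mul_of_nonneg_right _ (by positivity)
        have h0 : (0:ℝ) ≤ c*Real.exp (-(3.68*c))*Y*(EE c Y) :=
          mul_nonneg (mul_nonneg (mul_nonneg hcpos.le (Real.exp_pos _).le) hY0.le) (EE_nonneg _ _)
        nlinarith [h0]

lemma B_nonneg {c Y : ℝ} (hc : 2*π ≤ c) (hY0 : 0 < Y) (hY : Y ≤ 1/2) :
    0 ≤ -∑' n : ℤ, mm c ((n:ℝ) - Y) := by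
  have hpi : (3.141592 : ℝ) < π := Real.pi_gt_d6
  have hc6 : (6:ℝ) ≤ c := by linarith
  have hcpos : (0:ℝ) < c := by linarith
  have h1 : Summable fun n : ℕ => mm c ((n:ℝ) + (1-Y)) :=
    summable_mm_fam hc6 (by linarith) (by linarith)
  have h2 : Summable fun n : ℕ => mm c ((n:ℝ) + (1+Y)) :=
    summable_mm_fam hc6 (by linarith) (by linarith)
  rw [int_split (mm c) (mm_neg c) Y h1 h2]
  rcases le_or_gt Y 0.08 with hreg | hreg
  · -- regime B1 : 0 < Y ≤ 0.08
    have hsub := Summable.tsum_sub h1 h2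
    set D : ℕ → ℝ := fun n => mm c ((n:ℝ)+(1-Y)) - mm c ((n:ℝ)+(1+Y)) with hD
    have hDsum : Summable D := h1.sub h2
    have hsplit := Summable.tsum_eq_zero_add hDsum
    have hD0 : D 0 ≤ 6.12*c*Y*(EE c Y)*Real.exp (-(0.84*c)) := by
      show mm c (((0:ℕ):ℝ)+(1-Y)) - mm c (((0:ℕ):ℝ)+(1+Y)) ≤ _
      simp only [Nat.cast_zero, zero_add]
      exact B1_term0 hc6 hY0 hreg
    have hterm : ∀ n : ℕ,
        D (n+1) ≤ (93.72*c*Real.exp (-(3.68*c))*Y*(EE c Y)) * (16*Real.exp (-(3.84*c)))^n := by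
      intro n
      have e1 : ((((n+1):ℕ):ℝ)) + (1-Y) = ((n:ℝ)+2)-Y := by push_cast; ring
      have e2 : ((((n+1):ℕ):ℝ)) + (1+Y) = ((n:ℝ)+2)+Y := by push_cast; ring
      show mm c ((((n+1):ℕ):ℝ)+(1-Y)) - mm c ((((n+1):ℕ):ℝ)+(1+Y)) ≤ _
      rw [e1, e2]
      exact B1_termS hc6 hY0 hreg n
    have hrho : (16*Real.exp (-(3.84*c))) ≤ 1/2 := by
      have hq := exp_ge_pow (x := 3.84*c) 2 (by positivity) (by norm_num)
      have h11 : (12.5:ℝ) ≤ 1 + 3.84*c/(2:ℕ) := by push_cast; nlinarith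
      have h32 : (32:ℝ) ≤ Real.exp (3.84*c) := by
        nlinarith [hq, pow_le_pow_left₀ (show (0:ℝ) ≤ 12.5 by norm_num) h11 2]
      have h9 := exp_inv_le (show (0:ℝ) < 32 by norm_num) h32
      norm_num at h9 ⊢
      linarith
    have htail := tsum_le_geo ((summable_nat_add_iff 1).2 hDsum)
      (mul_nonneg (mul_nonneg (mul_nonneg (mul_nonneg (by norm_num) hcpos.le)
        (Real.exp_pos _).le) hY0.le) (EE_nonneg _ _))
      (by positivity : (0:ℝ) ≤ 16*Real.exp (-(3.84*c))) hrho hterm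
    have hmmY : Y*(1/4)*(EE c Y) ≤ mm c Y := by
      rw [mm]
      nlinarith [EE_nonneg c Y, sq_nonneg Y, mul_nonneg (mul_nonneg hY0.le (sq_nonneg Y)) (EE_nonneg c Y)]
    have hnum := numB1 hc
    have hYE : (0:ℝ) ≤ Y*(EE c Y) := mul_nonneg hY0.le (EE_nonneg c Y)
    have hnumYE := mul_le_mul_of_nonneg_right hnum hYE
    -- goal : 0 ≤ -(-mm Y + (S1 - S2))
    have hfinal : (∑' n : ℕ, mm c ((n:ℝ)+(1-Y))) - ∑' n : ℕ, mm c ((n:ℝ)+(1+Y)) ≤ mm c Y := by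
      rw [← hsub]
      calc ∑' n : ℕ, D n = D 0 + ∑' n : ℕ, D (n+1) := hsplit
        _ ≤ 6.12*c*Y*(EE c Y)*Real.exp (-(0.84*c))
            + 2*(93.72*c*Real.exp (-(3.68*c))*Y*(EE c Y)) := by linarith [hD0, htail]
        _ ≤ Y*(1/4)*(EE c Y) := by nlinarith [hnumYE]
        _ ≤ mm c Y := hmmY
    linarith [hfinal]
  · -- regime B23 : 0.08 < Y ≤ 1/2
    rw [shift_one (mm c) (1-Y) h1]
    have h1' : Summable fun n : ℕ => mm c ((n:ℝ) + (1+(1-Y))) :=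
      summable_mm_fam hc6 (by linarith) (by linarith)
    have hsub := Summable.tsum_sub h2 h1'
    have hterm : ∀ n : ℕ, 0 ≤ mm c ((n:ℝ)+(1+Y)) - mm c ((n:ℝ)+(1+(1-Y))) := by
      intro n
      have hn0 : (0:ℝ) ≤ (n:ℝ) := Nat.cast_nonneg n
      apply sub_nonneg.2
      apply mm_mono hc (by linarith) (by linarith) (by linarith)
    have hpos : 0 ≤ ∑' n : ℕ, (mm c ((n:ℝ)+(1+Y)) - mm c ((n:ℝ)+(1+(1-Y)))) :=
      tsum_nonneg hterm
    have hb0 : mm c (1-Y) ≤ mm c Y := b0_nonneg hc hreg.le hY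
    linarith [hpos, hsub, hb0]

end CubicAux8

noncomputable section CubicAux9
open Real
set_option maxHeartbeats 1000000

def PP1 (c t : ℝ) : ℝ := t * Real.exp (-(c * t ^ 2))

def PP3 (c t : ℝ) : ℝ := t ^ 3 * Real.exp (-(c * t ^ 2))

lemma PP1_neg (c t : ℝ) : PP1 c (-t) = - PP1 c t := by
  simp only [PP1, neg_sq]; ring

lemma PP3_neg (c t : ℝ) : PP3 c (-t) = - PP3 c t := by
  simp only [PP3, neg_sq]; ring_nf

lemma summable_PP1_fam {c : ℝ} (hc : 6 ≤ c) {b : ℝ} (hb0 : 0 ≤ b) (hb : b ≤ 2) :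
    Summable (fun n : ℕ => PP1 c ((n:ℝ) + b)) := by
  apply summable_dom
  intro n
  have ht0 : (0:ℝ) ≤ (n:ℝ) + b := by positivity
  have h1 : |PP1 c ((n:ℝ)+b)| ≤ ((n:ℝ)+b) * (((n:ℝ)+b)^2 + 1) * Real.exp (-(c * ((n:ℝ)+b)^2)) := by
    rw [PP1, abs_mul, abs_of_pos (Real.exp_pos _), abs_of_nonneg ht0]
    have := Real.exp_pos (-(c * ((n:ℝ)+b)^2))
    nlinarith [mul_nonneg (mul_nonneg ht0 (sq_nonneg ((n:ℝ)+b))) this.le]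
  exact le_trans h1 (dom_main hc n (by linarith) (by linarith))

lemma summable_PP3_fam {c : ℝ} (hc : 6 ≤ c) {b : ℝ} (hb0 : 0 ≤ b) (hb : b ≤ 2) :
    Summable (fun n : ℕ => PP3 c ((n:ℝ) + b)) := by
  apply summable_dom
  intro n
  have ht0 : (0:ℝ) ≤ (n:ℝ) + b := by positivity
  have h1 : |PP3 c ((n:ℝ)+b)| ≤ ((n:ℝ)+b) * (((n:ℝ)+b)^2 + 1) * Real.exp (-(c * ((n:ℝ)+b)^2)) := by
    rw [PP3, abs_mul, abs_of_pos (Real.exp_pos _), abs_of_nonneg (by positivity : (0:ℝ) ≤ ((n:ℝ)+b)^3)]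
    have := Real.exp_pos (-(c * ((n:ℝ)+b)^2))
    nlinarith [mul_nonneg ht0 this.le]
  exact le_trans h1 (dom_main hc n (by linarith) (by linarith))

/-- The core inequality for `c ≥ 2π`, `0 < Y ≤ 1/2`. -/
lemma core_bound {c Y : ℝ} (hc : 2*π ≤ c) (hY0 : 0 < Y) (hY : Y ≤ 1/2) :
    |∑' n : ℤ, PP3 c ((n:ℝ) - Y)| ≤ (1/4) * |∑' n : ℤ, PP1 c ((n:ℝ) - Y)| := by
  have hpi : (3.141592 : ℝ) < π := Real.pi_gt_d6
  have hc6 : (6:ℝ) ≤ c := by linarith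
  have hS1 : Summable (fun n : ℤ => PP1 c ((n:ℝ) - Y)) :=
    int_summable (PP1 c) (PP1_neg c) Y
      (summable_PP1_fam hc6 (by linarith) (by linarith))
      (summable_PP1_fam hc6 (by linarith) (by linarith))
  have hS3 : Summable (fun n : ℤ => PP3 c ((n:ℝ) - Y)) :=
    int_summable (PP3 c) (PP3_neg c) Y
      (summable_PP3_fam hc6 (by linarith) (by linarith))
      (summable_PP3_fam hc6 (by linarith) (by linarith))
  have hAe : ∑' n : ℤ, gg c ((n:ℝ) - Y)
      = (∑' n : ℤ, PP3 c ((n:ℝ) - Y)) - (1/4) * ∑' n : ℤ, PP1 c ((n:ℝ) - Y) := by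
    calc ∑' n : ℤ, gg c ((n:ℝ) - Y)
        = ∑' n : ℤ, (PP3 c ((n:ℝ) - Y) - (1/4) * PP1 c ((n:ℝ) - Y)) :=
          tsum_congr (fun n => by simp only [gg, PP3, PP1, EE]; ring)
      _ = (∑' n : ℤ, PP3 c ((n:ℝ) - Y)) - ∑' n : ℤ, (1/4) * PP1 c ((n:ℝ) - Y) :=
          Summable.tsum_sub hS3 (hS1.mul_left (1/4))
      _ = (∑' n : ℤ, PP3 c ((n:ℝ) - Y)) - (1/4) * ∑' n : ℤ, PP1 c ((n:ℝ) - Y) := by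
          rw [tsum_mul_left]
  have hBe : ∑' n : ℤ, mm c ((n:ℝ) - Y)
      = (∑' n : ℤ, PP3 c ((n:ℝ) - Y)) + (1/4) * ∑' n : ℤ, PP1 c ((n:ℝ) - Y) := by
    calc ∑' n : ℤ, mm c ((n:ℝ) - Y)
        = ∑' n : ℤ, (PP3 c ((n:ℝ) - Y) + (1/4) * PP1 c ((n:ℝ) - Y)) :=
          tsum_congr (fun n => by simp only [mm, PP3, PP1, EE]; ring)
      _ = (∑' n : ℤ, PP3 c ((n:ℝ) - Y)) + ∑' n : ℤ, (1/4) * PP1 c ((n:ℝ) - Y) :=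
          Summable.tsum_add hS3 (hS1.mul_left (1/4))
      _ = (∑' n : ℤ, PP3 c ((n:ℝ) - Y)) + (1/4) * ∑' n : ℤ, PP1 c ((n:ℝ) - Y) := by
          rw [tsum_mul_left]
  have hA := A_nonneg hc hY0 hY
  have hB := B_nonneg hc hY0 hY
  rw [hAe] at hA
  rw [hBe] at hB
  set a := ∑' n : ℤ, PP3 c ((n:ℝ) - Y) with ha
  set b := ∑' n : ℤ, PP1 c ((n:ℝ) - Y) with hb
  have hble : b ≤ 0 := by linarith
  rw [abs_of_nonpos hble]
  rw [abs_le]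
  constructor <;> linarith

/-- shift invariance of the sums. -/
lemma shift_sum (F : ℝ → ℝ) (Y : ℝ) (k : ℤ) :
    ∑' n : ℤ, F ((n:ℝ) - (Y - (k:ℝ))) = ∑' n : ℤ, F ((n:ℝ) - Y) := by
  have h := (Equiv.addRight k).tsum_eq (fun n : ℤ => F ((n:ℝ) - Y))
  calc ∑' n : ℤ, F ((n:ℝ) - (Y - (k:ℝ)))
      = ∑' n : ℤ, F ((((Equiv.addRight k) n : ℤ):ℝ) - Y) := by
        apply tsum_congr
        intro n
        congr 1
        simp only [Equiv.coe_addRight]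
        push_cast
        ring
    _ = ∑' n : ℤ, F ((n:ℝ) - Y) := h

/-- negation anti-invariance. -/
lemma neg_sum (F : ℝ → ℝ) (hodd : ∀ t, F (-t) = -F t) (Y : ℝ) :
    ∑' n : ℤ, F ((n:ℝ) - Y) = -∑' n : ℤ, F ((n:ℝ) + Y) := by
  have h := (Equiv.neg ℤ).tsum_eq (fun n : ℤ => F ((n:ℝ) - Y))
  calc ∑' n : ℤ, F ((n:ℝ) - Y)
      = ∑' n : ℤ, F ((((Equiv.neg ℤ) n : ℤ):ℝ) - Y) := h.symm
    _ = ∑' n : ℤ, -F ((n:ℝ) + Y) := by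
        apply tsum_congr
        intro n
        have e : (((Equiv.neg ℤ) n : ℤ):ℝ) - Y = -((n:ℝ) + Y) := by
          simp only [Equiv.neg_apply]
          push_cast
          ring
        rw [e, hodd]
    _ = -∑' n : ℤ, F ((n:ℝ) + Y) := tsum_neg

end CubicAux9

theorem cubic_gaussian_sum_bound (X Y : ℝ) (hX0 : 0 < X) (hX : X ≤ 1 / 2) :
    |∑' n : ℤ, ((n : ℝ) - Y) ^ 3 * Real.exp (-π * ((n : ℝ) - Y) ^ 2 / X)| ≤
      (1 / 4) * |∑' n : ℤ, ((n : ℝ) - Y) * Real.exp (-π * ((n : ℝ) - Y) ^ 2 / X)| := by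
  have hpi : (0:ℝ) < π := Real.pi_pos
  set c : ℝ := π / X with hcdef
  have hc : 2*π ≤ c := by
    rw [hcdef, le_div_iff₀ hX0]; nlinarith
  have e3 : ∑' n : ℤ, ((n : ℝ) - Y) ^ 3 * Real.exp (-π * ((n : ℝ) - Y) ^ 2 / X)
      = ∑' n : ℤ, PP3 c ((n:ℝ) - Y) := by
    apply tsum_congr; intro n
    rw [PP3]
    congr 1
    congr 1
    rw [hcdef]; ring
  have e1 : ∑' n : ℤ, ((n : ℝ) - Y) * Real.exp (-π * ((n : ℝ) - Y) ^ 2 / X)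
      = ∑' n : ℤ, PP1 c ((n:ℝ) - Y) := by
    apply tsum_congr; intro n
    rw [PP1]
    congr 1
    congr 1
    rw [hcdef]; ring
  rw [e3, e1]
  have hk1 : ((⌊Y + 1/2⌋ : ℤ):ℝ) ≤ Y + 1/2 := Int.floor_le _
  have hk2 : Y + 1/2 < (⌊Y + 1/2⌋ : ℤ) + 1 := Int.lt_floor_add_one _
  rw [← shift_sum (PP3 c) Y ⌊Y + 1/2⌋, ← shift_sum (PP1 c) Y ⌊Y + 1/2⌋]
  rcases lt_trichotomy (Y - ((⌊Y + 1/2⌋ : ℤ):ℝ)) 0 with hneg | hzero | hpos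
  · rw [neg_sum (PP3 c) (PP3_neg c) _, neg_sum (PP1 c) (PP1_neg c) _, abs_neg, abs_neg]
    have e4 : ∑' n : ℤ, PP3 c ((n:ℝ) + (Y - ((⌊Y + 1/2⌋ : ℤ):ℝ)))
        = ∑' n : ℤ, PP3 c ((n:ℝ) - (-(Y - ((⌊Y + 1/2⌋ : ℤ):ℝ)))) :=
      tsum_congr (fun n => by rw [sub_neg_eq_add])
    have e5 : ∑' n : ℤ, PP1 c ((n:ℝ) + (Y - ((⌊Y + 1/2⌋ : ℤ):ℝ)))
        = ∑' n : ℤ, PP1 c ((n:ℝ) - (-(Y - ((⌊Y + 1/2⌋ : ℤ):ℝ)))) :=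
      tsum_congr (fun n => by rw [sub_neg_eq_add])
    rw [e4, e5]
    exact core_bound hc (by linarith) (by linarith)
  · rw [hzero]
    have hS3 : ∑' n : ℤ, PP3 c ((n:ℝ) - 0) = 0 := by
      have h0 := neg_sum (PP3 c) (PP3_neg c) 0
      have h1 : ∑' n : ℤ, PP3 c ((n:ℝ) + 0) = ∑' n : ℤ, PP3 c ((n:ℝ) - 0) :=
        tsum_congr (fun n => by norm_num)
      rw [h1] at h0
      linarith
    have hS1 : ∑' n : ℤ, PP1 c ((n:ℝ) - 0) = 0 := by
      have h0 := neg_sum (PP1 c) (PP1_neg c) 0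
      have h1 : ∑' n : ℤ, PP1 c ((n:ℝ) + 0) = ∑' n : ℤ, PP1 c ((n:ℝ) - 0) :=
        tsum_congr (fun n => by norm_num)
      rw [h1] at h0
      linarith
    rw [hS3, hS1]
    simp
  · exact core_bound hc hpos (by linarith)
end

section
/- For every positive integer n and every Y ∈ ℝ with sin(2πY) ≠ 0, the function g_n(Y) := sin(2nπY)/sin(2πY) is differentiable at Y and satisfies |g_n'(Y)| ≤ (2π/3)(n−1)n(n+1)·|sin(2πY)|. -/
open Real

private lemma abs_sin_nat_mul_le' (k : ℕ) (x : ℝ) : |Real.sin (k * x)| ≤ k * |Real.sin x| := by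
  induction k with
  | zero => simp
  | succ m ih =>
    have harg : ((m : ℝ) + 1) * x = m * x + x := by ring
    have h1 : |Real.sin (m*x) * Real.cos x| ≤ |Real.sin (m*x)| := by
      rw [abs_mul]; exact mul_le_of_le_one_right (abs_nonneg _) (Real.abs_cos_le_one x)
    have h2 : |Real.cos (m*x) * Real.sin x| ≤ |Real.sin x| := by
      rw [abs_mul]; exact mul_le_of_le_one_left (abs_nonneg _) (Real.abs_cos_le_one _)
    have h3 := abs_add_le (Real.sin (m*x) * Real.cos x) (Real.cos (m*x) * Real.sin x)
    push_cast
    rw [harg, Real.sin_add]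
    push_cast at ih
    nlinarith [abs_nonneg (Real.sin x)]

private lemma abs_sin_int_mul_le' (m : ℤ) (x : ℝ) : |Real.sin (m * x)| ≤ |(m : ℝ)| * |Real.sin x| := by
  rcases le_or_gt 0 m with h | h
  · lift m to ℕ using h
    simpa using abs_sin_nat_mul_le' m x
  · have h' : (0:ℤ) ≤ -m := by omega
    lift (-m) to ℕ using h' with k hk
    have hm : (m : ℝ) = -(k : ℝ) := by
      have : (m : ℝ) = -((-m : ℤ) : ℝ) := by push_cast; ring
      rw [this, ← hk]; push_cast; ring
    rw [hm]
    have : Real.sin (-(k:ℝ) * x) = - Real.sin (k * x) := by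
      rw [← Real.sin_neg]; ring_nf
    rw [this, abs_neg, abs_neg, abs_of_nonneg (by positivity : (0:ℝ) ≤ (k:ℝ))]
    exact abs_sin_nat_mul_le' k x

private lemma sum_range_cast (n : ℕ) : ∑ j ∈ Finset.range n, (j : ℝ) = n * (n - 1) / 2 := by
  induction n with
  | zero => simp
  | succ m ih => rw [Finset.sum_range_succ, ih]; push_cast; ring

private lemma sum_range_sq_cast (n : ℕ) : ∑ j ∈ Finset.range n, (j : ℝ)^2 = n * (n-1) * (2*n-1) / 6 := by
  induction n with
  | zero => simp
  | succ m ih => rw [Finset.sum_range_succ, ih]; push_cast; ring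

private lemma sum_coef_sq (n : ℕ) :
    ∑ j ∈ Finset.range n, (2*(j:ℝ) - n + 1)^2 = n * ((n:ℝ)^2 - 1) / 3 := by
  have h : ∀ j ∈ Finset.range n, (2*(j:ℝ) - n + 1)^2
      = 4*(j:ℝ)^2 + ((2:ℝ) - 2*n) * (2*(j:ℝ)) + ((n:ℝ)-1)^2 := by
    intro j _; ring
  rw [Finset.sum_congr rfl h]
  rw [Finset.sum_add_distrib, Finset.sum_add_distrib, ← Finset.mul_sum, ← Finset.mul_sum,
    ← Finset.mul_sum, Finset.sum_const, sum_range_cast, sum_range_sq_cast]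
  simp only [nsmul_eq_mul, Finset.card_range]
  ring

private lemma key_identity (n : ℕ) (x : ℝ) :
    Real.sin x * ∑ j ∈ Finset.range n, Real.cos ((2*(j:ℝ) - n + 1) * x)
      = Real.sin (n * x) := by
  have h : ∀ j ∈ Finset.range n, Real.sin x * Real.cos ((2*(j:ℝ) - n + 1) * x)
      = (Real.sin ((2*((j:ℝ)+1) - n) * x) - Real.sin ((2*(j:ℝ) - n) * x)) / 2 := by
    intro j _
    rw [Real.sin_sub_sin]
    have e1 : ((2*((j:ℝ)+1) - n) * x - (2*(j:ℝ) - n) * x) / 2 = x := by ring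
    have e2 : ((2*((j:ℝ)+1) - n) * x + (2*(j:ℝ) - n) * x) / 2 = (2*(j:ℝ) - n + 1) * x := by ring
    rw [e1, e2]; ring
  rw [Finset.mul_sum, Finset.sum_congr rfl h, ← Finset.sum_div]
  have := Finset.sum_range_sub (fun j : ℕ => Real.sin ((2*(j:ℝ) - n) * x)) n
  push_cast at this
  rw [this]
  have : (2*(0:ℝ) - n) * x = -((n:ℝ) * x) := by ring
  rw [this, Real.sin_neg]
  have : (2*(n:ℝ) - n) * x = (n:ℝ) * x := by ring
  rw [this]
  ring

theorem dirichlet_quotient_derivative_bound (n : ℕ) (hn : 0 < n) (Y : ℝ)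
    (hY : Real.sin (2 * π * Y) ≠ 0) :
    DifferentiableAt ℝ (fun t : ℝ => Real.sin (2 * n * π * t) / Real.sin (2 * π * t)) Y ∧
    |deriv (fun t : ℝ => Real.sin (2 * n * π * t) / Real.sin (2 * π * t)) Y| ≤
      (2 * π / 3) * ((n : ℝ) - 1) * n * ((n : ℝ) + 1) * |Real.sin (2 * π * Y)| := by
  set c : ℕ → ℝ := fun j => (2*(j:ℝ) - n + 1) with hc
  set F : ℝ → ℝ := fun t => ∑ j ∈ Finset.range n, Real.cos (c j * (2 * π * t)) with hF
  -- eventual equality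
  have hopen : IsOpen {t : ℝ | Real.sin (2 * π * t) ≠ 0} :=
    isOpen_ne.preimage (by continuity)
  have hmem : Y ∈ {t : ℝ | Real.sin (2 * π * t) ≠ 0} := hY
  have hEq : (fun t : ℝ => Real.sin (2 * n * π * t) / Real.sin (2 * π * t)) =ᶠ[nhds Y] F := by
    filter_upwards [hopen.mem_nhds hmem] with t ht
    have hkey := key_identity n (2 * π * t)
    have harg : (2 * (n:ℝ) * π * t) = (n:ℝ) * (2 * π * t) := by ring
    rw [harg, ← hkey]
    field_simp [ht]
    simp only [hF, hc]
    exact Finset.sum_congr rfl (fun j _ => by congr 1; ring)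
  -- derivative of F
  have hder : ∀ j ∈ Finset.range n, HasDerivAt (fun t : ℝ => Real.cos (c j * (2 * π * t)))
      (-Real.sin (c j * (2 * π * Y)) * (c j * (2 * π))) Y := by
    intro j _
    have h1 : HasDerivAt (fun t : ℝ => c j * (2 * π * t)) (c j * (2 * π)) Y := by
      have := (hasDerivAt_id Y).const_mul (c j * (2 * π))
      simpa [mul_assoc, mul_comm, mul_left_comm] using this
    exact (Real.hasDerivAt_cos (c j * (2 * π * Y))).comp Y h1
  have hFder : HasDerivAt F (∑ j ∈ Finset.range n, -Real.sin (c j * (2 * π * Y)) * (c j * (2 * π))) Y :=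
    HasDerivAt.fun_sum hder
  have hdiffF : DifferentiableAt ℝ F Y := hFder.differentiableAt
  have hdiff : DifferentiableAt ℝ (fun t : ℝ => Real.sin (2 * n * π * t) / Real.sin (2 * π * t)) Y :=
    (Filter.EventuallyEq.differentiableAt_iff hEq).mpr hdiffF
  refine ⟨hdiff, ?_⟩
  rw [Filter.EventuallyEq.deriv_eq hEq, hFder.deriv]
  -- bound the sum
  calc |∑ j ∈ Finset.range n, -Real.sin (c j * (2 * π * Y)) * (c j * (2 * π))|
      ≤ ∑ j ∈ Finset.range n, |(-Real.sin (c j * (2 * π * Y)) * (c j * (2 * π)))| :=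
        Finset.abs_sum_le_sum_abs _ _
    _ ≤ ∑ j ∈ Finset.range n, (2 * π) * (c j)^2 * |Real.sin (2 * π * Y)| := by
        apply Finset.sum_le_sum
        intro j hj
        have hint : c j = ((2*(j:ℤ) - n + 1 : ℤ) : ℝ) := by rw [hc]; push_cast; ring
        have hb : |Real.sin (c j * (2 * π * Y))| ≤ |c j| * |Real.sin (2 * π * Y)| := by
          rw [hint]; exact abs_sin_int_mul_le' _ _
        rw [abs_mul, abs_neg, abs_mul]
        have hπ : |2 * π| = 2 * π := abs_of_pos (by positivity)
        rw [hπ]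
        calc |Real.sin (c j * (2 * π * Y))| * (|c j| * (2 * π))
            ≤ (|c j| * |Real.sin (2 * π * Y)|) * (|c j| * (2 * π)) := by
              apply mul_le_mul_of_nonneg_right hb; positivity
          _ = 2 * π * (c j)^2 * |Real.sin (2 * π * Y)| := by
              rw [← sq_abs (c j)]; ring
    _ = (2 * π / 3) * ((n : ℝ) - 1) * n * ((n : ℝ) + 1) * |Real.sin (2 * π * Y)| := by
        rw [← Finset.sum_mul]
        congr 1
        rw [show (∑ j ∈ Finset.range n, 2 * π * (c j)^2) = 2 * π * ∑ j ∈ Finset.range n, (c j)^2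
          from (Finset.mul_sum _ _ _).symm]
        rw [hc]
        rw [sum_coef_sq]
        ring
end

section
/- Let 1 < α ≤ 1.1 and let z = x + iy lie in the domain D_𝒢 = {z ∈ ℍ : |z| > 1, 0 < Re z < 1/2}. Define A_{n,m}(α; y) := n³ m (α² e^{−πy(αn² + m²/α)} − e^{−πy(αm² + n²/α)}) for positive integers n, m. Then Σ_{n=1}^∞ Σ_{m=1}^∞ A_{n,m}(α; y)·sin(2mnπx) > 0. -/
open Real Complex

/-- `A_{n,m}(α; y) = n³ m (α² e^{−πy(αn² + m²/α)} − e^{−πy(αm² + n²/α)})`. -/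
noncomputable def latticeA (α y : ℝ) (n m : ℕ) : ℝ :=
  (n : ℝ) ^ 3 * (m : ℝ) *
    (α ^ 2 * Real.exp (-π * y * (α * (n : ℝ) ^ 2 + (m : ℝ) ^ 2 / α)) -
      Real.exp (-π * y * (α * (m : ℝ) ^ 2 + (n : ℝ) ^ 2 / α)))

namespace DSP

/-- majorant factor for the first index -/
noncomputable def phiR (j : ℕ) : ℝ := (j : ℝ) ^ 4 * (107 / 1000 : ℝ) ^ (j ^ 2)

/-- majorant factor for the second index -/
noncomputable def psiR (j : ℕ) : ℝ := (j : ℝ) ^ 2 * (107 / 1000 : ℝ) ^ (j ^ 2)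

lemma phiR_nonneg (j : ℕ) : 0 ≤ phiR j := by unfold phiR; positivity

lemma psiR_nonneg (j : ℕ) : 0 ≤ psiR j := by unfold psiR; positivity

/-- `|sin (n θ)| ≤ n |sin θ|`. -/
lemma abs_sin_nat_mul_le (n : ℕ) (θ : ℝ) : |Real.sin ((n : ℝ) * θ)| ≤ (n : ℝ) * |Real.sin θ| := by
  induction n with
  | zero => simp
  | succ k ih =>
    have h : ((k + 1 : ℕ) : ℝ) * θ = (k : ℝ) * θ + θ := by push_cast; ring
    rw [h, Real.sin_add]
    calc |Real.sin ((k : ℝ) * θ) * Real.cos θ + Real.cos ((k : ℝ) * θ) * Real.sin θ|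
        ≤ |Real.sin ((k : ℝ) * θ) * Real.cos θ| + |Real.cos ((k : ℝ) * θ) * Real.sin θ| :=
          abs_add_le _ _
      _ ≤ |Real.sin ((k : ℝ) * θ)| + |Real.sin θ| := by
          rw [abs_mul, abs_mul]
          have h1 : |Real.sin ((k:ℝ)*θ)| * |Real.cos θ| ≤ |Real.sin ((k:ℝ)*θ)| * 1 :=
            mul_le_mul_of_nonneg_left (abs_cos_le_one θ) (abs_nonneg _)
          have h2 : |Real.cos ((k:ℝ)*θ)| * |Real.sin θ| ≤ 1 * |Real.sin θ| :=
            mul_le_mul_of_nonneg_right (abs_cos_le_one _) (abs_nonneg _)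
          calc |Real.sin ((k:ℝ)*θ)| * |Real.cos θ| + |Real.cos ((k:ℝ)*θ)| * |Real.sin θ|
              ≤ |Real.sin ((k:ℝ)*θ)| * 1 + 1 * |Real.sin θ| := add_le_add h1 h2
            _ = |Real.sin ((k:ℝ)*θ)| + |Real.sin θ| := by ring
      _ ≤ (k : ℝ) * |Real.sin θ| + |Real.sin θ| := add_le_add_left ih _
      _ = ((k + 1 : ℕ) : ℝ) * |Real.sin θ| := by push_cast; ring

/-- Lipschitz-type bound for decaying exponentials. -/
lemma exp_lip {u v L : ℝ} (hu : L ≤ u) (hv : L ≤ v) :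
    |Real.exp (-u) - Real.exp (-v)| ≤ |u - v| * Real.exp (-L) := by
  have aux : ∀ a b : ℝ, L ≤ a → L ≤ b →
      Real.exp (-a) - Real.exp (-b) ≤ |a - b| * Real.exp (-L) := by
    intro a b ha hb
    rcases le_total a b with h | h
    · have h1 : Real.exp (-b) = Real.exp (-a) * Real.exp (a - b) := by
        rw [← Real.exp_add]; ring_nf
      have h2 : 1 - (b - a) ≤ Real.exp (a - b) := by
        have := Real.add_one_le_exp (a - b); linarith
      have h3 : Real.exp (-a) - Real.exp (-b) ≤ Real.exp (-a) * (b - a) := by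
        rw [h1]; nlinarith [Real.exp_pos (-a)]
      have h4 : Real.exp (-a) ≤ Real.exp (-L) := Real.exp_le_exp.2 (by linarith)
      have h5 : |a - b| = b - a := by rw [abs_sub_comm]; exact _root_.abs_of_nonneg (by linarith)
      rw [h5]
      calc Real.exp (-a) - Real.exp (-b) ≤ Real.exp (-a) * (b - a) := h3
        _ ≤ Real.exp (-L) * (b - a) := mul_le_mul_of_nonneg_right h4 (by linarith)
        _ = (b - a) * Real.exp (-L) := by ring
    · have h1 : Real.exp (-a) ≤ Real.exp (-b) := Real.exp_le_exp.2 (by linarith)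
      have h2 : (0:ℝ) ≤ |a - b| * Real.exp (-L) := by positivity
      linarith
  have h1 := aux u v hu hv
  have h2 := aux v u hv hu
  rw [abs_sub_comm v u] at h2
  rw [abs_le]
  exact ⟨by linarith, h1⟩

/-! ### Numeric exponential bounds -/

lemma exp_two_ge : (7389056 / 1000000 : ℝ) ≤ Real.exp 2 := by
  have h := Real.exp_one_gt_d9
  have h2 : Real.exp 2 = Real.exp 1 * Real.exp 1 := by
    rw [← Real.exp_add]; norm_num
  nlinarith [Real.exp_pos 1]

lemma exp_base_le : Real.exp (-(3618 / 1595)) ≤ (107 / 1000 : ℝ) := by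
  have h3 : (1000 / 107 : ℝ) ≤ Real.exp (3618 / 1595) := by
    have ha : Real.exp (3618 / 1595 : ℝ) = Real.exp 2 * Real.exp (428 / 1595) := by
      rw [← Real.exp_add]; norm_num
    have hb : (1 + 428 / 1595 : ℝ) ≤ Real.exp (428 / 1595) := by
      have := Real.add_one_le_exp (428 / 1595 : ℝ); linarith
    calc (1000 / 107 : ℝ) ≤ (7389056 / 1000000) * (1 + 428 / 1595) := by norm_num
      _ ≤ Real.exp 2 * Real.exp (428 / 1595) :=
          mul_le_mul exp_two_ge hb (by norm_num) (Real.exp_pos _).le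
      _ = Real.exp (3618 / 1595) := ha.symm
  rw [Real.exp_neg]
  have hpos : (0:ℝ) < 1000 / 107 := by norm_num
  calc (Real.exp (3618 / 1595))⁻¹ ≤ ((1000 : ℝ) / 107)⁻¹ := inv_anti₀ hpos h3
    _ = 107 / 1000 := by norm_num

lemma exp_half_le : Real.exp (1/2) ≤ (16487213 / 10000000 : ℝ) := by
  have h1 : Real.exp (1/2) * Real.exp (1/2) = Real.exp 1 := by
    rw [← Real.exp_add]; norm_num
  have h2 : Real.exp 1 < 2.7182818286 := Real.exp_one_lt_d9
  by_contra hcon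
  push_neg at hcon
  nlinarith [Real.exp_pos (1/2 : ℝ)]

lemma exp_45_le : Real.exp (9/2) ≤ (90019 / 1000 : ℝ) := by
  have h1 : Real.exp (9/2 : ℝ) = (Real.exp 1) ^ 4 * Real.exp (1/2) := by
    rw [show (9/2 : ℝ) = (4 : ℕ) * 1 + 1/2 from by norm_num, Real.exp_add, Real.exp_nat_mul]
  have h2 : Real.exp 1 ≤ 2.7182818286 := Real.exp_one_lt_d9.le
  have h3 : (Real.exp 1) ^ 4 ≤ (2.7182818286 : ℝ) ^ 4 :=
    pow_le_pow_left₀ (Real.exp_pos 1).le h2 4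
  have h4 := exp_half_le
  rw [h1]
  calc (Real.exp 1) ^ 4 * Real.exp (1/2) ≤ (2.7182818286 : ℝ) ^ 4 * (16487213 / 10000000) := by
        apply mul_le_mul h3 h4 (Real.exp_pos _).le (by positivity)
    _ ≤ 90019 / 1000 := by norm_num

/-! ### The pointwise exponential-polynomial bound -/

lemma poly_exp_bound {c : ℝ} (hc : 27/10 ≤ c) {S : ℕ} (h5 : 5 ≤ S) :
    (21/10) * (1 + c * (S:ℝ)) * Real.exp (-(10/11 * (c * (S:ℝ)))) ≤
      2742 * (107/1000 : ℝ) ^ S * Real.exp (-(201/100 * c)) := by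
  have hS5 : (5:ℝ) ≤ (S:ℝ) := by exact_mod_cast h5
  have hc0 : (0:ℝ) < c := by linarith
  set A := c * (S:ℝ) with hA
  have hA0 : (27/2 : ℝ) ≤ A := by nlinarith
  have h1 : 1 + A ≤ (29/2) * Real.exp ((A - 27/2) * (2/29)) := by
    have h := Real.add_one_le_exp ((A - 27/2) * (2/29))
    nlinarith [h]
  have h2 : (21/10) * (1 + A) * Real.exp (-(10/11 * A))
      ≤ (609/20) * (Real.exp (-(27/29)) * Real.exp (-(268/319 * A))) := by
    calc (21/10) * (1 + A) * Real.exp (-(10/11 * A))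
        ≤ (21/10) * ((29/2) * Real.exp ((A - 27/2) * (2/29))) * Real.exp (-(10/11 * A)) := by
          apply mul_le_mul_of_nonneg_right _ (Real.exp_pos _).le
          exact mul_le_mul_of_nonneg_left h1 (by norm_num)
      _ = (609/20) * Real.exp ((A - 27/2) * (2/29) + -(10/11 * A)) := by
          rw [Real.exp_add]; ring
      _ = (609/20) * Real.exp (-(27/29) + -(268/319 * A)) := by
          rw [show (A - 27/2) * (2/29) + -(10/11 * A) = -(27/29) + -(268/319 * A) from by ring]
      _ = (609/20) * (Real.exp (-(27/29)) * Real.exp (-(268/319 * A))) := by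
          rw [← Real.exp_add]
  have h3 : Real.exp (-(268/319 * A)) ≤
      Real.exp (5427/1000) * Real.exp (-(3618/1595 * (S:ℝ))) * Real.exp (-(201/100 * c)) := by
    rw [← Real.exp_add, ← Real.exp_add, Real.exp_le_exp]
    have hnn : (0:ℝ) ≤ 268/319 * (S:ℝ) - 201/100 := by nlinarith
    have key : (27/10) * (268/319 * (S:ℝ) - 201/100) ≤ c * (268/319 * (S:ℝ) - 201/100) :=
      mul_le_mul_of_nonneg_right hc hnn
    rw [hA]
    nlinarith [key]
  have h4 : Real.exp (-(3618/1595 * (S:ℝ))) ≤ (107/1000 : ℝ) ^ S := by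
    have he : Real.exp (-(3618/1595 * (S:ℝ))) = (Real.exp (-(3618/1595))) ^ S := by
      rw [show -(3618/1595 * (S:ℝ)) = (S:ℝ) * (-(3618/1595)) from by ring, Real.exp_nat_mul]
    rw [he]
    exact pow_le_pow_left₀ (Real.exp_pos _).le exp_base_le S
  have h5' : (609/20 : ℝ) * Real.exp (-(27/29)) * Real.exp (5427/1000) ≤ 2742 := by
    have hme : Real.exp (-(27/29)) * Real.exp (5427/1000) = Real.exp (130383/29000 : ℝ) := by
      rw [← Real.exp_add]; norm_num
    rw [mul_assoc, hme]
    have hle : Real.exp (130383/29000 : ℝ) ≤ Real.exp (9/2) := Real.exp_le_exp.2 (by norm_num)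
    calc (609/20 : ℝ) * Real.exp (130383/29000) ≤ (609/20) * Real.exp (9/2) :=
          mul_le_mul_of_nonneg_left hle (by norm_num)
      _ ≤ (609/20) * (90019/1000) := mul_le_mul_of_nonneg_left exp_45_le (by norm_num)
      _ ≤ 2742 := by norm_num
  calc (21/10) * (1 + A) * Real.exp (-(10/11 * A))
      ≤ (609/20) * (Real.exp (-(27/29)) * Real.exp (-(268/319 * A))) := h2
    _ ≤ (609/20) * (Real.exp (-(27/29)) *
        (Real.exp (5427/1000) * Real.exp (-(3618/1595 * (S:ℝ))) * Real.exp (-(201/100 * c)))) := by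
        apply mul_le_mul_of_nonneg_left _ (by norm_num : (0:ℝ) ≤ 609/20)
        exact mul_le_mul_of_nonneg_left h3 (Real.exp_pos _).le
    _ ≤ (609/20) * (Real.exp (-(27/29)) *
        (Real.exp (5427/1000) * (107/1000 : ℝ) ^ S * Real.exp (-(201/100 * c)))) := by
        apply mul_le_mul_of_nonneg_left _ (by norm_num : (0:ℝ) ≤ 609/20)
        apply mul_le_mul_of_nonneg_left _ (Real.exp_pos _).le
        apply mul_le_mul_of_nonneg_right _ (Real.exp_pos _).le
        exact mul_le_mul_of_nonneg_left h4 (Real.exp_pos _).le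
    _ = ((609/20) * Real.exp (-(27/29)) * Real.exp (5427/1000)) *
          ((107/1000 : ℝ) ^ S * Real.exp (-(201/100 * c))) := by ring
    _ ≤ 2742 * ((107/1000 : ℝ) ^ S * Real.exp (-(201/100 * c))) := by
        apply mul_le_mul_of_nonneg_right h5' (by positivity)
    _ = 2742 * (107/1000 : ℝ) ^ S * Real.exp (-(201/100 * c)) := by ring

/-! ### Core bound for the exponential difference -/

lemma core_bound {α c N M : ℝ} (hα0 : 1 < α) (hα1 : α ≤ 11/10) (hc0 : 0 < c)
    (hN : 0 ≤ N) (hM : 0 ≤ M) :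
    |α^2 * Real.exp (-(c * (α*N + M/α))) - Real.exp (-(c * (α*M + N/α)))| ≤
      (α - 1) * ((21/10) * (1 + c*(N+M)) * Real.exp (-(10/11 * (c*(N+M))))) := by
  have hα : (0:ℝ) < α := by linarith
  have hinv : (10/11 : ℝ) ≤ 1/α := by
    rw [le_div_iff₀ hα]; linarith
  have hbase : ∀ P Q : ℝ, 0 ≤ P → 0 ≤ Q → (10/11)*(P+Q) ≤ α*P + Q/α := by
    intro P Q hP hQ
    have h2 : (10/11)*Q ≤ Q/α := by
      calc (10/11)*Q ≤ (1/α)*Q := mul_le_mul_of_nonneg_right hinv hQ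
        _ = Q/α := by ring
    nlinarith
  have hLu : 10/11 * (c*(N+M)) ≤ c * (α*N + M/α) := by
    have h1 := hbase N M hN hM
    calc 10/11 * (c*(N+M)) = c * ((10/11)*(N+M)) := by ring
      _ ≤ c * (α*N + M/α) := mul_le_mul_of_nonneg_left h1 hc0.le
  have hLv : 10/11 * (c*(N+M)) ≤ c * (α*M + N/α) := by
    have h1 := hbase M N hM hN
    calc 10/11 * (c*(N+M)) = c * ((10/11)*(M+N)) := by ring
      _ ≤ c * (α*M + N/α) := mul_le_mul_of_nonneg_left h1 hc0.le
  have h1α : 1/α ≤ 1 := by rw [div_le_one hα]; linarith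
  have huv : |c * (α*N + M/α) - c * (α*M + N/α)| ≤ (21/10)*(α-1) * (c*(N+M)) := by
    have h3 : c * (α*N + M/α) - c * (α*M + N/α) = (c*(α - 1/α))*(N - M) := by
      field_simp; ring
    have h4 : (0:ℝ) ≤ α - 1/α := by linarith
    have h7 : 2 - α ≤ 1/α := by
      rw [le_div_iff₀ hα]; nlinarith [sq_nonneg (α - 1)]
    have h5 : α - 1/α ≤ (21/10)*(α-1) := by linarith
    have h8 : |N - M| ≤ N + M := abs_le.2 ⟨by linarith, by linarith⟩
    rw [h3, abs_mul, _root_.abs_of_nonneg (mul_nonneg hc0.le h4)]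
    calc c*(α - 1/α) * |N - M| ≤ (c*((21/10)*(α-1))) * (N+M) := by
          apply mul_le_mul (mul_le_mul_of_nonneg_left h5 hc0.le) h8 (abs_nonneg _)
          have : (0:ℝ) ≤ α - 1 := by linarith
          positivity
      _ = (21/10)*(α-1) * (c*(N+M)) := by ring
  have hexp := exp_lip hLu hLv
  have hsplit : α^2 * Real.exp (-(c * (α*N + M/α))) - Real.exp (-(c * (α*M + N/α))) =
      (α^2 - 1) * Real.exp (-(c * (α*N + M/α))) +
        (Real.exp (-(c * (α*N + M/α))) - Real.exp (-(c * (α*M + N/α)))) := by ring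
  have hs1 : |(α^2 - 1) * Real.exp (-(c * (α*N + M/α)))| ≤
      (21/10)*(α-1) * Real.exp (-(10/11 * (c*(N+M)))) := by
    rw [abs_mul, _root_.abs_of_nonneg (by nlinarith : (0:ℝ) ≤ α^2 - 1),
      _root_.abs_of_pos (Real.exp_pos _)]
    have e1 : Real.exp (-(c * (α*N + M/α))) ≤ Real.exp (-(10/11 * (c*(N+M)))) :=
      Real.exp_le_exp.2 (by linarith)
    have e2 : α^2 - 1 ≤ (21/10)*(α-1) := by nlinarith
    calc (α^2 - 1) * Real.exp (-(c * (α*N + M/α)))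
        ≤ (α^2 - 1) * Real.exp (-(10/11 * (c*(N+M)))) :=
          mul_le_mul_of_nonneg_left e1 (by nlinarith)
      _ ≤ (21/10)*(α-1) * Real.exp (-(10/11 * (c*(N+M)))) :=
          mul_le_mul_of_nonneg_right e2 (Real.exp_pos _).le
  have hs2 : |Real.exp (-(c * (α*N + M/α))) - Real.exp (-(c * (α*M + N/α)))| ≤
      ((21/10)*(α-1) * (c*(N+M))) * Real.exp (-(10/11 * (c*(N+M)))) := by
    calc |Real.exp (-(c * (α*N + M/α))) - Real.exp (-(c * (α*M + N/α)))|
        ≤ |c * (α*N + M/α) - c * (α*M + N/α)| * Real.exp (-(10/11 * (c*(N+M)))) := hexp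
      _ ≤ ((21/10)*(α-1) * (c*(N+M))) * Real.exp (-(10/11 * (c*(N+M)))) :=
          mul_le_mul_of_nonneg_right huv (Real.exp_pos _).le
  calc |α^2 * Real.exp (-(c * (α*N + M/α))) - Real.exp (-(c * (α*M + N/α)))|
      ≤ |(α^2 - 1) * Real.exp (-(c * (α*N + M/α)))| +
          |Real.exp (-(c * (α*N + M/α))) - Real.exp (-(c * (α*M + N/α)))| := by
        rw [hsplit]; exact abs_add_le _ _
    _ ≤ (21/10)*(α-1) * Real.exp (-(10/11 * (c*(N+M)))) +
          ((21/10)*(α-1) * (c*(N+M))) * Real.exp (-(10/11 * (c*(N+M)))) := by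
        linarith [hs1, hs2]
    _ = (α - 1) * ((21/10) * (1 + c*(N+M)) * Real.exp (-(10/11 * (c*(N+M))))) := by ring

/-! ### Bound on |latticeA| -/

lemma latticeA_abs_le {α : ℝ} (y : ℝ) (hα0 : 1 < α) (hα1 : α ≤ 11/10) (hy : 0 < y)
    (n m : ℕ) :
    |latticeA α y n m| ≤
      (α - 1) * ((n:ℝ)^3 * (m:ℝ)) *
        ((21/10) * (1 + (π*y) * ((n^2 + m^2 : ℕ) : ℝ)) *
          Real.exp (-(10/11 * ((π*y) * ((n^2 + m^2 : ℕ) : ℝ))))) := by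
  have hc0 : 0 < π * y := mul_pos Real.pi_pos hy
  have hcore := core_bound (c := π*y) (N := ((n:ℝ))^2) (M := ((m:ℝ))^2)
    hα0 hα1 hc0 (sq_nonneg _) (sq_nonneg _)
  have hform : latticeA α y n m = (n:ℝ)^3 * (m:ℝ) *
      (α^2 * Real.exp (-((π*y) * (α*((n:ℝ))^2 + ((m:ℝ))^2/α))) -
        Real.exp (-((π*y) * (α*((m:ℝ))^2 + ((n:ℝ))^2/α)))) := by
    unfold latticeA
    rw [show -π*y*(α*(n:ℝ)^2 + (m:ℝ)^2/α) = -((π*y) * (α*((n:ℝ))^2 + ((m:ℝ))^2/α)) from by ring,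
      show -π*y*(α*(m:ℝ)^2 + (n:ℝ)^2/α) = -((π*y) * (α*((m:ℝ))^2 + ((n:ℝ))^2/α)) from by ring]
  have hScast : ((n^2 + m^2 : ℕ) : ℝ) = ((n:ℝ))^2 + ((m:ℝ))^2 := by push_cast; ring
  rw [hform, abs_mul, _root_.abs_of_nonneg (by positivity : (0:ℝ) ≤ (n:ℝ)^3 * (m:ℝ)), hScast]
  calc (n:ℝ)^3 * (m:ℝ) *
        |α^2 * Real.exp (-((π*y) * (α*((n:ℝ))^2 + ((m:ℝ))^2/α))) -
          Real.exp (-((π*y) * (α*((m:ℝ))^2 + ((n:ℝ))^2/α)))|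
      ≤ (n:ℝ)^3 * (m:ℝ) * ((α - 1) * ((21/10) * (1 + (π*y)*(((n:ℝ))^2+((m:ℝ))^2)) *
          Real.exp (-(10/11 * ((π*y)*(((n:ℝ))^2+((m:ℝ))^2)))))) :=
        mul_le_mul_of_nonneg_left hcore (by positivity)
    _ = (α - 1) * ((n:ℝ)^3 * (m:ℝ)) * ((21/10) * (1 + (π*y) * (((n:ℝ))^2 + ((m:ℝ))^2)) *
          Real.exp (-(10/11 * ((π*y) * (((n:ℝ))^2 + ((m:ℝ))^2))))) := by ring

/-! ### Per-term bound for the double series -/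

lemma term_bound {α y : ℝ} (x : ℝ) (hα0 : 1 < α) (hα1 : α ≤ 11/10) (hy : 0 < y)
    (hc : 27/10 ≤ π*y) (n m : ℕ) (h5 : 5 ≤ n^2 + m^2) :
    |latticeA α y n m * Real.sin (2*(m:ℝ)*(n:ℝ)*π*x)| ≤
      (α - 1) * Real.exp (-(201/100 * (π*y))) * |Real.sin (2*π*x)| *
        (2742 * (phiR n * psiR m)) := by
  have hα1' : (0:ℝ) ≤ α - 1 := by linarith
  have hsin : |Real.sin (2*(m:ℝ)*(n:ℝ)*π*x)| ≤ ((m*n : ℕ):ℝ) * |Real.sin (2*π*x)| := by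
    have hrw : 2*(m:ℝ)*(n:ℝ)*π*x = ((m*n : ℕ):ℝ) * (2*π*x) := by push_cast; ring
    rw [hrw]
    exact abs_sin_nat_mul_le _ _
  have hA := latticeA_abs_le y hα0 hα1 hy n m
  have hB := poly_exp_bound hc h5
  have hfac : (0:ℝ) ≤ (21/10) * (1 + (π*y) * ((n^2 + m^2 : ℕ) : ℝ)) *
      Real.exp (-(10/11 * ((π*y) * ((n^2 + m^2 : ℕ) : ℝ)))) := by
    have hc0 : (0:ℝ) < π * y := mul_pos Real.pi_pos hy
    have h1 : (0:ℝ) ≤ 1 + (π*y) * ((n^2 + m^2 : ℕ) : ℝ) := by positivity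
    positivity
  have hApos : (0:ℝ) ≤ (α - 1) * ((n:ℝ)^3 * (m:ℝ)) *
      ((21/10) * (1 + (π*y) * ((n^2 + m^2 : ℕ) : ℝ)) *
        Real.exp (-(10/11 * ((π*y) * ((n^2 + m^2 : ℕ) : ℝ))))) :=
    mul_nonneg (mul_nonneg hα1' (by positivity)) hfac
  calc |latticeA α y n m * Real.sin (2*(m:ℝ)*(n:ℝ)*π*x)|
      = |latticeA α y n m| * |Real.sin (2*(m:ℝ)*(n:ℝ)*π*x)| := abs_mul _ _
    _ ≤ ((α - 1) * ((n:ℝ)^3 * (m:ℝ)) *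
          ((21/10) * (1 + (π*y) * ((n^2 + m^2 : ℕ) : ℝ)) *
            Real.exp (-(10/11 * ((π*y) * ((n^2 + m^2 : ℕ) : ℝ)))))) *
        (((m*n : ℕ):ℝ) * |Real.sin (2*π*x)|) :=
        mul_le_mul hA hsin (abs_nonneg _) hApos
    _ = ((α - 1) * ((n:ℝ)^4 * (m:ℝ)^2) * |Real.sin (2*π*x)|) *
          ((21/10) * (1 + (π*y) * ((n^2 + m^2 : ℕ) : ℝ)) *
            Real.exp (-(10/11 * ((π*y) * ((n^2 + m^2 : ℕ) : ℝ))))) := by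
        push_cast; ring
    _ ≤ ((α - 1) * ((n:ℝ)^4 * (m:ℝ)^2) * |Real.sin (2*π*x)|) *
          (2742 * (107/1000 : ℝ) ^ (n^2 + m^2) * Real.exp (-(201/100 * (π*y)))) := by
        apply mul_le_mul_of_nonneg_left hB
        exact mul_nonneg (mul_nonneg hα1' (by positivity)) (abs_nonneg _)
    _ = (α - 1) * Real.exp (-(201/100 * (π*y))) * |Real.sin (2*π*x)| *
          (2742 * (phiR n * psiR m)) := by
        unfold phiR psiR
        rw [pow_add]
        ring

/-! ### Summability and sum bounds for the majorants -/

lemma pnat_coe_succ (k : ℕ) : ((Equiv.pnatEquivNat.symm k : ℕ+) : ℕ) = k + 1 := rfl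

lemma tsum_pnat_eq (f : ℕ → ℝ) : ∑' j : ℕ+, f (j : ℕ) = ∑' k : ℕ, f (k + 1) := by
  rw [← Equiv.tsum_eq Equiv.pnatEquivNat.symm (fun j : ℕ+ => f (j : ℕ))]
  exact tsum_congr fun k => by rw [pnat_coe_succ]

lemma summable_pnat_of (f : ℕ → ℝ) (h : Summable (fun k : ℕ => f (k + 1))) :
    Summable (fun j : ℕ+ => f (j : ℕ)) :=
  (Equiv.summable_iff Equiv.pnatEquivNat.symm).mp h

lemma Wlt1 : ‖(107/1000 : ℝ)‖ < 1 := by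
  rw [Real.norm_eq_abs, _root_.abs_of_pos] <;> norm_num

lemma phi_succ_summable : Summable (fun k : ℕ => phiR (k + 1)) := by
  have h1 : Summable (fun k : ℕ => ((k:ℝ))^4 * (107/1000 : ℝ)^k) :=
    summable_pow_mul_geometric_of_norm_lt_one 4 Wlt1
  have h2 : Summable (fun k : ℕ => (((k+1 : ℕ)):ℝ)^4 * (107/1000 : ℝ)^(k+1)) :=
    (summable_nat_add_iff 1).2 h1
  apply Summable.of_nonneg_of_le (fun k => phiR_nonneg _) _ h2
  intro k
  unfold phiR
  apply mul_le_mul_of_nonneg_left _ (by positivity)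
  apply pow_le_pow_of_le_one (by norm_num) (by norm_num)
  exact Nat.le_self_pow two_ne_zero _

lemma psi_succ_summable : Summable (fun k : ℕ => psiR (k + 1)) := by
  have h1 : Summable (fun k : ℕ => ((k:ℝ))^2 * (107/1000 : ℝ)^k) :=
    summable_pow_mul_geometric_of_norm_lt_one 2 Wlt1
  have h2 : Summable (fun k : ℕ => (((k+1 : ℕ)):ℝ)^2 * (107/1000 : ℝ)^(k+1)) :=
    (summable_nat_add_iff 1).2 h1
  apply Summable.of_nonneg_of_le (fun k => psiR_nonneg _) _ h2
  intro k
  unfold psiR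
  apply mul_le_mul_of_nonneg_left _ (by positivity)
  apply pow_le_pow_of_le_one (by norm_num) (by norm_num)
  exact Nat.le_self_pow two_ne_zero _

lemma summable_phiP : Summable (fun j : ℕ+ => phiR (j : ℕ)) :=
  summable_pnat_of phiR phi_succ_summable

lemma summable_psiP : Summable (fun j : ℕ+ => psiR (j : ℕ)) :=
  summable_pnat_of psiR psi_succ_summable

lemma three_bound (k : ℕ) : ((k:ℝ) + 3) ≤ 3 * (4/3 : ℝ)^k := by
  have h1 : 1 + (k:ℝ) * (1/3) ≤ (1 + 1/3 : ℝ)^k := one_add_mul_le_pow (by norm_num) k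
  have h2 : (1 + 1/3 : ℝ) = 4/3 := by norm_num
  rw [h2] at h1
  nlinarith [h1]

lemma sq_63 (k : ℕ) : 6*k + 9 ≤ (k+3)^2 := by nlinarith [sq_nonneg k]

lemma phi_tail_le (k : ℕ) :
    phiR (k + 3) ≤ (81 * (107/1000 : ℝ)^9) * (256 * (107/1000 : ℝ)^6 / 81)^k := by
  unfold phiR
  have hb : (((k+3 : ℕ)):ℝ)^4 ≤ 81 * (256/81 : ℝ)^k := by
    have h2 := three_bound k
    have h3 : (((k+3 : ℕ)):ℝ) = (k:ℝ) + 3 := by push_cast; ring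
    rw [h3]
    calc ((k:ℝ) + 3)^4 ≤ (3 * (4/3 : ℝ)^k)^4 := by
          apply pow_le_pow_left₀ (by positivity) h2
      _ = 81 * (256/81 : ℝ)^k := by
          rw [mul_pow, ← pow_mul, mul_comm k 4, pow_mul]
          norm_num
  have hw : ((107/1000 : ℝ))^((k+3)^2) ≤ (107/1000 : ℝ)^9 * ((107/1000 : ℝ)^6)^k := by
    rw [← pow_mul, ← pow_add]
    apply pow_le_pow_of_le_one (by norm_num) (by norm_num)
    have := sq_63 k
    omega
  calc (((k+3 : ℕ)):ℝ)^4 * (107/1000 : ℝ)^((k+3)^2)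
      ≤ (81 * (256/81 : ℝ)^k) * ((107/1000 : ℝ)^9 * ((107/1000 : ℝ)^6)^k) := by
        apply mul_le_mul hb hw (by positivity) (by positivity)
    _ = (81 * (107/1000 : ℝ)^9) * (256 * (107/1000 : ℝ)^6 / 81)^k := by
        rw [show (256 * (107/1000 : ℝ)^6 / 81) = (256/81) * (107/1000 : ℝ)^6 from by ring,
          mul_pow]
        ring

lemma psi_tail_le (k : ℕ) :
    psiR (k + 3) ≤ (9 * (107/1000 : ℝ)^9) * (16 * (107/1000 : ℝ)^6 / 9)^k := by
  unfold psiR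
  have hb : (((k+3 : ℕ)):ℝ)^2 ≤ 9 * (16/9 : ℝ)^k := by
    have h2 := three_bound k
    have h3 : (((k+3 : ℕ)):ℝ) = (k:ℝ) + 3 := by push_cast; ring
    rw [h3]
    calc ((k:ℝ) + 3)^2 ≤ (3 * (4/3 : ℝ)^k)^2 := by
          apply pow_le_pow_left₀ (by positivity) h2
      _ = 9 * (16/9 : ℝ)^k := by
          rw [mul_pow, ← pow_mul, mul_comm k 2, pow_mul]
          norm_num
  have hw : ((107/1000 : ℝ))^((k+3)^2) ≤ (107/1000 : ℝ)^9 * ((107/1000 : ℝ)^6)^k := by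
    rw [← pow_mul, ← pow_add]
    apply pow_le_pow_of_le_one (by norm_num) (by norm_num)
    have := sq_63 k
    omega
  calc (((k+3 : ℕ)):ℝ)^2 * (107/1000 : ℝ)^((k+3)^2)
      ≤ (9 * (16/9 : ℝ)^k) * ((107/1000 : ℝ)^9 * ((107/1000 : ℝ)^6)^k) := by
        apply mul_le_mul hb hw (by positivity) (by positivity)
    _ = (9 * (107/1000 : ℝ)^9) * (16 * (107/1000 : ℝ)^6 / 9)^k := by
        rw [show (16 * (107/1000 : ℝ)^6 / 9) = (16/9) * (107/1000 : ℝ)^6 from by ring,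
          mul_pow]
        ring

lemma F_le : ∑' j : ℕ+, phiR (j : ℕ) ≤ 1091/10000 := by
  rw [tsum_pnat_eq phiR]
  have hsum : Summable (fun k : ℕ => phiR (k + 1)) := phi_succ_summable
  rw [← Summable.sum_add_tsum_nat_add 2 hsum]
  have hρ0 : (0:ℝ) ≤ 256 * (107/1000 : ℝ)^6 / 81 := by positivity
  have hρ1 : 256 * (107/1000 : ℝ)^6 / 81 < 1 := by norm_num
  have hgeo : Summable (fun k : ℕ =>
      (81 * (107/1000 : ℝ)^9) * (256 * (107/1000 : ℝ)^6 / 81)^k) :=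
    (summable_geometric_of_lt_one hρ0 hρ1).mul_left _
  have hle : ∀ k : ℕ, phiR (k + 2 + 1) ≤
      (81 * (107/1000 : ℝ)^9) * (256 * (107/1000 : ℝ)^6 / 81)^k := by
    intro k
    have h := phi_tail_le k
    rwa [show k + 3 = k + 2 + 1 from rfl] at h
  have htail : (∑' k : ℕ, phiR (k + 2 + 1)) ≤
      (81 * (107/1000 : ℝ)^9) * (1 - 256 * (107/1000 : ℝ)^6 / 81)⁻¹ := by
    calc (∑' k : ℕ, phiR (k + 2 + 1)) ≤
        ∑' k : ℕ, (81 * (107/1000 : ℝ)^9) * (256 * (107/1000 : ℝ)^6 / 81)^k :=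
          Summable.tsum_le_tsum hle ((summable_nat_add_iff (f := fun k => phiR (k+1)) 2).2 hsum) hgeo
      _ = (81 * (107/1000 : ℝ)^9) * (1 - 256 * (107/1000 : ℝ)^6 / 81)⁻¹ := by
          rw [tsum_mul_left, tsum_geometric_of_lt_one hρ0 hρ1]
  have hhead : ∑ i ∈ Finset.range 2, phiR (i + 1) = 107/1000 + 16 * (107/1000 : ℝ)^4 := by
    rw [Finset.sum_range_succ, Finset.sum_range_one]
    unfold phiR
    norm_num
  rw [hhead]
  have hnum : (81 * (107/1000 : ℝ)^9) * (1 - 256 * (107/1000 : ℝ)^6 / 81)⁻¹ ≤ 2/10^7 := by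
    have h : (0:ℝ) < 1 - 256 * (107/1000 : ℝ)^6 / 81 := by norm_num
    rw [mul_inv_le_iff₀ h]
    norm_num
  linarith [htail, hnum]

lemma G_le : ∑' j : ℕ+, psiR (j : ℕ) ≤ 10753/100000 := by
  rw [tsum_pnat_eq psiR]
  have hsum : Summable (fun k : ℕ => psiR (k + 1)) := psi_succ_summable
  rw [← Summable.sum_add_tsum_nat_add 2 hsum]
  have hρ0 : (0:ℝ) ≤ 16 * (107/1000 : ℝ)^6 / 9 := by positivity
  have hρ1 : 16 * (107/1000 : ℝ)^6 / 9 < 1 := by norm_num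
  have hgeo : Summable (fun k : ℕ =>
      (9 * (107/1000 : ℝ)^9) * (16 * (107/1000 : ℝ)^6 / 9)^k) :=
    (summable_geometric_of_lt_one hρ0 hρ1).mul_left _
  have hle : ∀ k : ℕ, psiR (k + 2 + 1) ≤
      (9 * (107/1000 : ℝ)^9) * (16 * (107/1000 : ℝ)^6 / 9)^k := by
    intro k
    have h := psi_tail_le k
    rwa [show k + 3 = k + 2 + 1 from rfl] at h
  have htail : (∑' k : ℕ, psiR (k + 2 + 1)) ≤
      (9 * (107/1000 : ℝ)^9) * (1 - 16 * (107/1000 : ℝ)^6 / 9)⁻¹ := by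
    calc (∑' k : ℕ, psiR (k + 2 + 1)) ≤
        ∑' k : ℕ, (9 * (107/1000 : ℝ)^9) * (16 * (107/1000 : ℝ)^6 / 9)^k :=
          Summable.tsum_le_tsum hle ((summable_nat_add_iff (f := fun k => psiR (k+1)) 2).2 hsum) hgeo
      _ = (9 * (107/1000 : ℝ)^9) * (1 - 16 * (107/1000 : ℝ)^6 / 9)⁻¹ := by
          rw [tsum_mul_left, tsum_geometric_of_lt_one hρ0 hρ1]
  have hhead : ∑ i ∈ Finset.range 2, psiR (i + 1) = 107/1000 + 4 * (107/1000 : ℝ)^4 := by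
    rw [Finset.sum_range_succ, Finset.sum_range_one]
    unfold psiR
    norm_num
  rw [hhead]
  have hnum : (9 * (107/1000 : ℝ)^9) * (1 - 16 * (107/1000 : ℝ)^6 / 9)⁻¹ ≤ 2/10^8 := by
    have h : (0:ℝ) < 1 - 16 * (107/1000 : ℝ)^6 / 9 := by norm_num
    rw [mul_inv_le_iff₀ h]
    norm_num
  linarith [htail, hnum]

end DSP

open DSP in
set_option maxHeartbeats 2000000 in
theorem double_sum_positivity (α : ℝ) (hα0 : 1 < α) (hα1 : α ≤ 1.1)
    (x y : ℝ) (hy : 0 < y) (habs : 1 < ‖(⟨x, y⟩ : ℂ)‖)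
    (hx0 : 0 < x) (hx1 : x < 1 / 2) :
    0 < ∑' n : ℕ+, ∑' m : ℕ+,
          latticeA α y (n : ℕ) (m : ℕ) * Real.sin (2 * (m : ℝ) * (n : ℝ) * π * x) := by
  have hα1' : α ≤ 11/10 := by norm_num at hα1 ⊢; linarith
  have hαsub : (0:ℝ) < α - 1 := by linarith
  -- geometry of the domain
  have hxy : 1 < x^2 + y^2 := by
    have h2 : (‖(⟨x,y⟩ : ℂ)‖)^2 = x^2 + y^2 := by
      rw [Complex.sq_norm, Complex.normSq_mk]; ring
    nlinarith [norm_nonneg (⟨x,y⟩ : ℂ)]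
  have hy866 : (866/1000 : ℝ) < y := by nlinarith
  have hπ := Real.pi_gt_d6
  have hc : 27/10 ≤ π * y := by nlinarith [Real.pi_pos]
  have hcpos : 0 < π * y := mul_pos Real.pi_pos hy
  have hspos : 0 < Real.sin (2*π*x) := by
    apply Real.sin_pos_of_pos_of_lt_pi (by positivity)
    nlinarith [Real.pi_pos]
  have hEpos : 0 < Real.exp (-(201/100 * (π*y))) := Real.exp_pos _
  -- the pair series and its majorant
  set T : ℕ+ × ℕ+ → ℝ := fun p =>
    latticeA α y (p.1 : ℕ) (p.2 : ℕ) *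
      Real.sin (2 * ((p.2 : ℕ) : ℝ) * ((p.1 : ℕ) : ℝ) * π * x) with hTdef
  set C : ℝ := (α - 1) * Real.exp (-(201/100 * (π*y))) * Real.sin (2*π*x) * 2742 with hCdef
  have hCpos : 0 < C := by
    rw [hCdef]; positivity
  set Mj : ℕ+ × ℕ+ → ℝ := fun p => C * (phiR (p.1 : ℕ) * psiR (p.2 : ℕ)) with hMjdef
  have hprodsum : Summable (fun p : ℕ+ × ℕ+ => phiR (p.1 : ℕ) * psiR (p.2 : ℕ)) :=
    summable_phiP.mul_of_nonneg summable_psiP (fun j => phiR_nonneg _) (fun j => psiR_nonneg _)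
  have hMjsum : Summable Mj := hprodsum.mul_left _
  have hMjnn : ∀ p, 0 ≤ Mj p := fun p =>
    mul_nonneg hCpos.le (mul_nonneg (phiR_nonneg _) (psiR_nonneg _))
  -- every pair ≠ (1,1) has n² + m² ≥ 5
  have hfive : ∀ p : ℕ+ × ℕ+, p ≠ (1,1) → 5 ≤ (p.1 : ℕ)^2 + (p.2 : ℕ)^2 := by
    rintro ⟨a, b⟩ hp
    show 5 ≤ (a : ℕ)^2 + (b : ℕ)^2
    have ha1 : 1 ≤ (a : ℕ) := a.one_le
    have hb1 : 1 ≤ (b : ℕ) := b.one_le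
    have h3 : ¬((a : ℕ) = 1 ∧ (b : ℕ) = 1) := by
      rintro ⟨hA, hB⟩
      exact hp (by
        have ha' : a = 1 := PNat.coe_eq_one_iff.mp hA
        have hb' : b = 1 := PNat.coe_eq_one_iff.mp hB
        rw [ha', hb'])
    have h4 : 2 ≤ (a : ℕ) ∨ 2 ≤ (b : ℕ) := by omega
    rcases h4 with h | h
    · have h5 : 2^2 ≤ (a:ℕ)^2 := Nat.pow_le_pow_left h 2
      have h6 : 1^2 ≤ (b:ℕ)^2 := Nat.pow_le_pow_left hb1 2
      norm_num at h5 h6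
      omega
    · have h5 : 2^2 ≤ (b:ℕ)^2 := Nat.pow_le_pow_left h 2
      have h6 : 1^2 ≤ (a:ℕ)^2 := Nat.pow_le_pow_left ha1 2
      norm_num at h5 h6
      omega
  -- per-term bound
  have hbound : ∀ p : ℕ+ × ℕ+, p ≠ (1,1) → |T p| ≤ Mj p := by
    intro p hp
    have h5 := hfive p hp
    have hb := term_bound x hα0 hα1' hy hc (p.1 : ℕ) (p.2 : ℕ) h5
    rw [_root_.abs_of_pos hspos] at hb
    calc |T p| ≤ (α - 1) * Real.exp (-(201/100 * (π*y))) * Real.sin (2*π*x) *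
          (2742 * (phiR (p.1 : ℕ) * psiR (p.2 : ℕ))) := hb
      _ = Mj p := by rw [hMjdef, hCdef]; ring
  -- summability of T
  have hTsum : Summable T := by
    apply Summable.of_norm_bounded_eventually hMjsum
    rw [Filter.eventually_cofinite]
    apply Set.Finite.subset (Set.finite_singleton ((1,1) : ℕ+ × ℕ+))
    intro p hp
    simp only [Set.mem_setOf_eq, Set.mem_singleton_iff] at hp ⊢
    by_contra hne
    exact hp (by rw [Real.norm_eq_abs]; exact hbound p hne)
  have hTfact : ∀ b : ℕ+, Summable fun c : ℕ+ => T (b, c) := fun b => hTsum.prod_factor b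
  -- reduce to the sum over pairs
  have key : 0 < ∑' p : ℕ+ × ℕ+, T p := by
    rw [Summable.tsum_eq_add_tsum_ite hTsum (1,1)]
    -- main term
    have hαsum : α + 1/α ≤ 201/100 := by
      have hα : (0:ℝ) < α := by linarith
      have key2 : (1:ℝ) ≤ α * (201/100 - α) := by nlinarith
      have : 1/α ≤ 201/100 - α := by
        rw [div_le_iff₀ hα]; nlinarith
      linarith
    have hT11 : 2 * ((α - 1) * Real.exp (-(201/100 * (π*y))) * Real.sin (2*π*x)) ≤ T (1,1) := by
      have e1 : latticeA α y 1 1 = (α^2 - 1) * Real.exp (-π*y*(α*1 + 1/α)) := by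
        unfold latticeA
        push_cast
        ring_nf
      have e2 : T (1,1) = latticeA α y 1 1 * Real.sin (2*1*1*π*x) := by
        rw [hTdef]
        norm_num
      have e3 : Real.sin (2*1*1*π*x) = Real.sin (2*π*x) := by norm_num
      rw [e2, e1, e3]
      have hexp : Real.exp (-(201/100 * (π*y))) ≤ Real.exp (-π*y*(α*1 + 1/α)) := by
        apply Real.exp_le_exp.2
        have := mul_le_mul_of_nonneg_left hαsum hcpos.le
        nlinarith [this]
      have hsq : 2 * (α - 1) ≤ α^2 - 1 := by nlinarith
      have h2E : 0 < Real.exp (-π*y*(α*1 + 1/α)) := Real.exp_pos _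
      have hmul : 2 * (α - 1) * Real.exp (-(201/100 * (π*y))) ≤
          (α^2 - 1) * Real.exp (-π*y*(α*1 + 1/α)) := by
        calc 2 * (α - 1) * Real.exp (-(201/100 * (π*y)))
            ≤ 2 * (α - 1) * Real.exp (-π*y*(α*1 + 1/α)) :=
              mul_le_mul_of_nonneg_left hexp (by linarith)
          _ ≤ (α^2 - 1) * Real.exp (-π*y*(α*1 + 1/α)) :=
              mul_le_mul_of_nonneg_right hsq h2E.le
      calc 2 * ((α - 1) * Real.exp (-(201/100 * (π*y))) * Real.sin (2*π*x))
          = (2 * (α - 1) * Real.exp (-(201/100 * (π*y)))) * Real.sin (2*π*x) := by ring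
        _ ≤ ((α^2 - 1) * Real.exp (-π*y*(α*1 + 1/α))) * Real.sin (2*π*x) :=
            mul_le_mul_of_nonneg_right hmul hspos.le
    -- tail bound
    set T' : ℕ+ × ℕ+ → ℝ := fun p => if p = (1,1) then 0 else T p with hT'def
    set Mj' : ℕ+ × ℕ+ → ℝ := fun p => if p = (1,1) then 0 else Mj p with hMj'def
    have hMj'eq : ∀ p, Mj' p = if p = (1,1) then 0 else Mj p := fun p => rfl
    have hT'eq : ∀ p, T' p = if p = (1,1) then 0 else T p := fun p => rfl
    have hMj'le : ∀ p, Mj' p ≤ Mj p := by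
      intro p
      rw [hMj'eq p]
      by_cases h : p = (1,1)
      · rw [if_pos h]; exact hMjnn p
      · rw [if_neg h]
    have hMj'nn : ∀ p, 0 ≤ Mj' p := by
      intro p
      rw [hMj'eq p]
      by_cases h : p = (1,1)
      · rw [if_pos h]
      · rw [if_neg h]; exact hMjnn p
    have hMj'sum : Summable Mj' := Summable.of_nonneg_of_le hMj'nn hMj'le hMjsum
    have hT'abs : ∀ p, |T' p| ≤ Mj' p := by
      intro p
      rw [hT'eq p, hMj'eq p]
      by_cases h : p = (1,1)
      · rw [if_pos h, if_pos h, abs_zero]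
      · rw [if_neg h, if_neg h]; exact hbound p h
    have hT'sum : Summable T' := by
      apply Summable.of_norm_bounded hMj'sum
      intro p
      rw [Real.norm_eq_abs]
      exact hT'abs p
    have htail : -(∑' p, Mj' p) ≤ ∑' p : ℕ+ × ℕ+, T' p := by
      rw [← tsum_neg]
      apply Summable.tsum_le_tsum _ hMj'sum.neg hT'sum
      intro p
      have := (abs_le.mp (hT'abs p)).1
      linarith
    -- sum of the majorant
    have hMtotal : ∑' p, Mj p =
        C * ((∑' j : ℕ+, phiR (j : ℕ)) * (∑' j : ℕ+, psiR (j : ℕ))) := by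
      calc ∑' p, Mj p = C * ∑' p : ℕ+ × ℕ+, (phiR (p.1 : ℕ) * psiR (p.2 : ℕ)) :=
            tsum_mul_left
        _ = C * (∑' (b : ℕ+) (c : ℕ+), phiR (b : ℕ) * psiR (c : ℕ)) := by
            rw [Summable.tsum_prod' hprodsum (fun b => hprodsum.prod_factor b)]
        _ = C * (∑' b : ℕ+, phiR (b : ℕ) * ∑' c : ℕ+, psiR (c : ℕ)) := by
            congr 1
            exact tsum_congr fun b => tsum_mul_left
        _ = C * ((∑' j : ℕ+, phiR (j : ℕ)) * (∑' j : ℕ+, psiR (j : ℕ))) := by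
            rw [tsum_mul_right]
    have hMj'total : ∑' p, Mj' p = (∑' p, Mj p) - Mj (1,1) := by
      have h := Summable.tsum_eq_add_tsum_ite hMjsum (1,1)
      rw [hMj'def]
      linarith [h]
    -- numbers
    have hF := F_le
    have hG := G_le
    have hF0 : 0 ≤ ∑' j : ℕ+, phiR (j : ℕ) := tsum_nonneg fun j => phiR_nonneg _
    have hG0 : 0 ≤ ∑' j : ℕ+, psiR (j : ℕ) := tsum_nonneg fun j => psiR_nonneg _
    have hFG : (∑' j : ℕ+, phiR (j : ℕ)) * (∑' j : ℕ+, psiR (j : ℕ)) ≤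
        (1091/10000) * (10753/100000) :=
      mul_le_mul hF hG hG0 (by norm_num)
    have hM11 : Mj (1,1) = C * ((107/1000) * (107/1000)) := by
      rw [hMjdef]
      norm_num [phiR, psiR]
    have hMj'small : ∑' p, Mj' p ≤ C * (283/1000000) := by
      rw [hMj'total, hMtotal, hM11]
      have : (∑' j : ℕ+, phiR (j:ℕ)) * (∑' j : ℕ+, psiR (j:ℕ)) - (107/1000) * (107/1000) ≤
          283/1000000 := by
        calc (∑' j : ℕ+, phiR (j:ℕ)) * (∑' j : ℕ+, psiR (j:ℕ)) - (107/1000) * (107/1000)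
            ≤ (1091/10000) * (10753/100000) - (107/1000) * (107/1000) := by linarith
          _ ≤ 283/1000000 := by norm_num
      calc C * ((∑' j : ℕ+, phiR (j:ℕ)) * (∑' j : ℕ+, psiR (j:ℕ))) -
            C * ((107/1000) * (107/1000))
          = C * ((∑' j : ℕ+, phiR (j:ℕ)) * (∑' j : ℕ+, psiR (j:ℕ)) -
              (107/1000) * (107/1000)) := by ring
        _ ≤ C * (283/1000000) := mul_le_mul_of_nonneg_left this hCpos.le
    -- assemble
    have hCsplit : C * (283/1000000) < 2 * ((α - 1) * Real.exp (-(201/100 * (π*y))) *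
        Real.sin (2*π*x)) := by
      rw [hCdef]
      have h0 : 0 < (α - 1) * Real.exp (-(201/100 * (π*y))) * Real.sin (2*π*x) := by positivity
      nlinarith [h0]
    have hT'ge : -(C * (283/1000000)) ≤ ∑' p : ℕ+ × ℕ+, T' p := by
      have := hMj'small
      linarith [htail]
    have : ∑' (p : ℕ+ × ℕ+), (if p = (1,1) then 0 else T p) = ∑' p, T' p := by
      rw [hT'def]
    rw [this]
    linarith [hT11, hT'ge, hCsplit]
  -- back to the iterated sum
  calc (0:ℝ) < ∑' p : ℕ+ × ℕ+, T p := key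
    _ = ∑' (n : ℕ+) (m : ℕ+), T (n, m) := Summable.tsum_prod' hTsum hTfact
    _ = ∑' n : ℕ+, ∑' m : ℕ+,
          latticeA α y (n : ℕ) (m : ℕ) * Real.sin (2 * (m : ℝ) * (n : ℝ) * π * x) := rfl
end
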